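/- arXiv:1509.08139 — 4 statements merged into one kernel-verified Lean document; each statement's English description precedes it below -/
import Mathlib

section
/- Let n ≥ 2 be an integer, t ∈ ℝ, k ∈ ℤ₀, C₀ > 0, and let v : ℤ₀ → ℂ satisfy (Σ_{m∈ℤ₀}|v_m|²)^{1/2} ≤ C₀. Then the sum Σ_{k₁+⋯+k_n=k, k_j∈ℤ₀} |Φ_n(k₁,…,k_n)| ∏_{j=1}^n |v_{k_j}|/|k_j| converges, and |I^n_k(t)(v)| ≤ |k| · Z_{0,2}^{n−2} C₀^n / (2^{n−1}(n−2)!), where Z_{0,2} := (π²/3)^{1/2}. In particular, for fixed k, I^n_k(t)(v) → 0 as n → ∞, uniformly in t and uniformly over v in the C₀-ball of ℓ²(ℤ₀). -/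
noncomputable section

open scoped BigOperators
open Complex
open scoped ENNReal
open Real

/-- `ℤ₀ = ℤ ∖ {0}`. -/
abbrev Z0 : Type := {k : ℤ // k ≠ 0}

/-- negation on `ℤ₀`. -/
def negZ0 (m : Z0) : Z0 := ⟨-m.1, neg_ne_zero.mpr m.2⟩

/-- summand of the `FL^{s,p}` norm. -/
def FLsummand (s p : ℝ) (v : Z0 → ℂ) (k : Z0) : ℝ :=
  (|(k.1 : ℝ)| ^ s * ‖v k‖) ^ p

/-- the Fourier–Lebesgue norm. -/
def FLnorm (s p : ℝ) (v : Z0 → ℂ) : ℝ :=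
  (∑' k : Z0, FLsummand s p v k) ^ (1 / p)

/-- modulation function. -/
def Phi (n : ℕ) (a : Fin n → ℤ) : ℤ := (∑ j, a j) ^ 2 - ∑ j, (a j) ^ 2

/-- tuples of nonzero frequencies summing to `k`. -/
def Tup (n : ℕ) (k : Z0) : Type := {a : Fin n → Z0 // (∑ j, (a j).1) = k.1}

/-- the multilinear form `N^n_k(t)(v)`. -/
def Ncoef (n : ℕ) (k : Z0) (t : ℝ) (v : Z0 → ℂ) : ℂ :=
  ((-1 : ℂ) ^ n * (k.1 : ℂ) / (2 ^ (n - 1) * (Nat.factorial n : ℂ))) *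
    ∑' a : Tup n k,
      Complex.exp (Complex.I * ((Phi n fun j => (a.1 j).1 : ℤ) : ℂ) * (t : ℂ)) *
        ∏ j, v (a.1 j) / ((a.1 j).1 : ℂ)

/-- the multilinear form `I^n_k(t)(v)`. -/
def Icoef (n : ℕ) (k : Z0) (t : ℝ) (v : Z0 → ℂ) : ℂ :=
  ((-1 : ℂ) ^ n * (k.1 : ℂ) / (2 ^ (n - 1) * (Nat.factorial n : ℂ))) *
    ∑' a : Tup n k,
      Complex.I * ((Phi n fun j => (a.1 j).1 : ℤ) : ℂ) *
        Complex.exp (Complex.I * ((Phi n fun j => (a.1 j).1 : ℤ) : ℂ) * (t : ℂ)) *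
        ∏ j, v (a.1 j) / ((a.1 j).1 : ℂ)

/-- the correction term `R^n_k(t)(v)`. -/
def Rcoef (n : ℕ) (k : Z0) (t : ℝ) (v : Z0 → ℂ) : ℂ :=
  (-(Complex.I / 4)) *
    (∑' m : Z0, Complex.exp (-2 * Complex.I * ((m.1 : ℂ)) ^ 2 * (t : ℂ)) * v m * v (negZ0 m)) *
    Ncoef (n - 1) k t v

/-- pairs of nonzero frequencies summing to `k`. -/
def Pair (k : Z0) : Type := {q : Z0 × Z0 // q.1.1 + q.2.1 = k.1}

/-- right-hand side of the Fourier-side quadratic derivative NLS. -/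
def dnlsRHS (u : Z0 → ℂ) (k : Z0) : ℂ :=
  -Complex.I * (k.1 : ℂ) ^ 2 * u k +
    (Complex.I * (k.1 : ℂ) / 2) * ∑' q : Pair k, u q.1.1 * u q.1.2

/-- `u` solves the Fourier-side quadratic derivative NLS on `S`, with absolutely converging
nonlinearity. -/
def SolvesDNLS (u : ℝ → Z0 → ℂ) (S : Set ℝ) : Prop :=
  ∀ k : Z0, ∀ t ∈ S,
    Summable (fun q : Pair k => ‖u t q.1.1 * u t q.1.2‖) ∧
    HasDerivAt (fun τ => u τ k) (dnlsRHS (u t) k) t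

/-- continuity of `t ↦ (|k|^s u_k(t))_k` as a map into `ℓ^p(ℤ₀)`. -/
def FLcontOn (s p : ℝ) (u : ℝ → Z0 → ℂ) (S : Set ℝ) : Prop :=
  (∀ t ∈ S, Summable (FLsummand s p (u t))) ∧
  ∀ t₀ ∈ S, ∀ ε > 0, ∃ δ > 0, ∀ t ∈ S, |t - t₀| < δ →
    FLnorm s p (fun k => u t k - u t₀ k) < ε

/-- interaction representation `v_k(t) = e^{ik²t} u_k(t)`. -/
def interRep (u : ℝ → Z0 → ℂ) (t : ℝ) (k : Z0) : ℂ :=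
  Complex.exp (Complex.I * (k.1 : ℂ) ^ 2 * (t : ℂ)) * u t k





theorem baselZ : HasSum (fun m : ℤ => if m = 0 then (0:ℝ) else 1 / (m:ℝ)^2) (π^2/3) := by
  have h0 : HasSum (fun n : ℕ => (1:ℝ) / (n:ℝ)^2) (π^2/6) := hasSum_zeta_two
  have h1 : HasSum (fun n : ℕ => (1:ℝ) / ((n:ℝ)+1)^2) (π^2/6) := by
    have h2 : HasSum (fun n : ℕ => (1:ℝ)/(↑(n+1):ℝ)^2) (π^2/6) := by
      rw [hasSum_nat_add_iff (f := fun n : ℕ => (1:ℝ)/(n:ℝ)^2) 1]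
      simpa using h0
    simpa using h2
  have := HasSum.of_nat_of_neg_add_one (f := fun m : ℤ => if m = 0 then (0:ℝ) else 1/(m:ℝ)^2)
    ?_ ?_ (m := π^2/6) (m' := π^2/6)
  · convert this using 1; ring
  · convert h0 using 2 with n
    rcases Nat.eq_zero_or_pos n with h | h
    · simp [h]
    · rw [if_neg (by exact_mod_cast h.ne')]
      norm_num
  · convert h1 using 2 with n
    rw [if_neg (by omega)]
    push_cast
    ring_nf




theorem tsum_pi_prod : ∀ (m : ℕ) (G : Fin m → ℤ → ℝ≥0∞),
    ∑' c : Fin m → ℤ, ∏ r, G r (c r) = ∏ r, ∑' x, G r x := by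
  intro m
  induction m with
  | zero =>
    intro G
    simp only [Finset.univ_eq_empty, Finset.prod_empty]
    exact tsum_eq_single (fun r => r.elim0) (fun b hb => absurd (Subsingleton.elim b _) hb)
  | succ m ih =>
    intro G
    rw [← (Fin.consEquiv (fun _ : Fin (m+1) => ℤ)).tsum_eq]
    simp only [Fin.consEquiv_apply]
    rw [ENNReal.tsum_prod']
    simp only [Fin.prod_univ_succ, Fin.cons_zero, Fin.cons_succ]
    calc ∑' (a : ℤ) (b : Fin m → ℤ), G 0 a * ∏ r, G r.succ (b r)
        = ∑' (a : ℤ), G 0 a * ∑' (b : Fin m → ℤ), ∏ r, G r.succ (b r) := by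
          simp_rw [ENNReal.tsum_mul_left]
      _ = (∑' x, G 0 x) * ∑' (b : Fin m → ℤ), ∏ r, G r.succ (b r) := by
          rw [ENNReal.tsum_mul_right]
      _ = _ := by rw [ih]

/-- drop coordinate 0 equivalence -/
def dropEquiv (m : ℕ) (s : ℤ) : {a : Fin (m+1) → ℤ // ∑ l, a l = s} ≃ (Fin m → ℤ) where
  toFun a := fun r => a.1 r.succ
  invFun c := ⟨Fin.cons (s - ∑ r, c r) c, by simp [Fin.sum_univ_succ]⟩
  left_inv a := by
    ext l
    refine Fin.cases ?_ (fun r => by simp) l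
    have := a.2
    rw [Fin.sum_univ_succ] at this
    simp only [Fin.cons_zero, Fin.cons_succ]
    omega
  right_inv c := by ext r; simp

theorem core01 (m : ℕ) (s : ℤ) (F : Fin (m+2) → ℤ → ℝ≥0∞) (A B : ℝ≥0∞)
    (hA : ∀ t : ℤ, ∑' x : ℤ, F 0 x * F 1 (t - x) ≤ A)
    (hB : ∀ l : Fin (m+2), l ≠ 0 → l ≠ 1 → ∑' x : ℤ, F l x ≤ B) :
    ∑' a : {a : Fin (m+2) → ℤ // ∑ l, a l = s}, ∏ l, F l (a.1 l) ≤ A * B ^ m := by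
  rw [← (dropEquiv (m+1) s).symm.tsum_eq]
  rw [← (Fin.consEquiv (fun _ : Fin (m+1) => ℤ)).tsum_eq]
  have key : ∀ (y : ℤ) (d : Fin m → ℤ),
      (∏ l, F l (((dropEquiv (m+1) s).symm ((Fin.consEquiv _) (y, d))).1 l)) =
      F 0 ((s - (y + ∑ r, d r)) ) * (F 1 y * ∏ r, F r.succ.succ (d r)) := by
    intro y d
    simp only [dropEquiv, Fin.consEquiv_apply, Equiv.coe_fn_symm_mk]
    rw [Fin.prod_univ_succ, Fin.prod_univ_succ]
    simp [Fin.sum_univ_succ, mul_assoc]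
  calc ∑' p : ℤ × (Fin m → ℤ), ∏ l, F l (((dropEquiv (m+1) s).symm ((Fin.consEquiv _) p)).1 l)
      = ∑' (d : Fin m → ℤ) (y : ℤ),
          F 0 (s - (y + ∑ r, d r)) * (F 1 y * ∏ r, F r.succ.succ (d r)) := by
        rw [ENNReal.tsum_prod']; rw [ENNReal.tsum_comm]
        congr 1; ext d; congr 1; ext y; exact key y d
    _ = ∑' (d : Fin m → ℤ), (∏ r, F r.succ.succ (d r)) *
          ∑' (y : ℤ), F 0 ((s - ∑ r, d r) - y) * F 1 y := by
        congr 1; ext d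
        rw [← ENNReal.tsum_mul_left]
        congr 1; ext y
        rw [show s - (y + ∑ r, d r) = s - ∑ r, d r - y by ring]
        ring
    _ ≤ A * B ^ m := by
        have hS : ∀ t : ℤ, (∑' y : ℤ, F 0 (t - y) * F 1 y) ≤ A := by
          intro t
          have e := (Equiv.subLeft t).tsum_eq (f := fun y : ℤ => F 0 (t - y) * F 1 y)
          calc ∑' y : ℤ, F 0 (t - y) * F 1 y
              = ∑' x : ℤ, F 0 x * F 1 (t - x) := by
                rw [← e]; congr 1; ext x
                simp only [Equiv.subLeft_apply, sub_sub_cancel]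
            _ ≤ A := hA t
        calc ∑' (d : Fin m → ℤ), (∏ r, F r.succ.succ (d r)) *
              ∑' (y : ℤ), F 0 (s - ∑ r, d r - y) * F 1 y
            ≤ ∑' (d : Fin m → ℤ), (∏ r, F r.succ.succ (d r)) * A :=
              ENNReal.tsum_le_tsum (fun d => mul_le_mul_right (hS _) _)
          _ = A * ∑' (d : Fin m → ℤ), ∏ r, F r.succ.succ (d r) := by
              rw [ENNReal.tsum_mul_right, mul_comm]
          _ = A * ∏ r : Fin m, ∑' x : ℤ, F r.succ.succ x := by rw [tsum_pi_prod]
          _ ≤ A * B ^ m := by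
              refine mul_le_mul_right ?_ A
              calc ∏ r : Fin m, ∑' x : ℤ, F r.succ.succ x
                  ≤ ∏ _r : Fin m, B := by
                    refine Finset.prod_le_prod' fun r _ => hB _ (Fin.succ_ne_zero _) ?_
                    intro h
                    rw [← Fin.succ_zero_eq_one] at h
                    exact Fin.succ_ne_zero r (Fin.succ_injective _ h)
                _ = B ^ m := by simp

theorem corePair (m : ℕ) (s : ℤ) (F : Fin (m+2) → ℤ → ℝ≥0∞) (i j : Fin (m+2)) (hij : i ≠ j)
    (A B : ℝ≥0∞)
    (hA : ∀ t : ℤ, ∑' x : ℤ, F i x * F j (t - x) ≤ A)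
    (hB : ∀ l, l ≠ i → l ≠ j → ∑' x : ℤ, F l x ≤ B) :
    ∑' a : {a : Fin (m+2) → ℤ // ∑ l, a l = s}, ∏ l, F l (a.1 l) ≤ A * B ^ m := by
  classical
  set σ₁ := Equiv.swap (0 : Fin (m+2)) i with hσ₁
  set j' := σ₁.symm j with hj'def
  have hj'0 : j' ≠ 0 := by
    intro h
    apply hij.symm
    rw [hj'def] at h
    have := congrArg σ₁ h
    rw [Equiv.apply_symm_apply] at this
    rw [this, Equiv.swap_apply_left]
  have hj'1 : σ₁ j' = j := Equiv.apply_symm_apply _ _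
  set σ₂ := Equiv.swap (1 : Fin (m+2)) j' with hσ₂
  set σ := σ₂.trans σ₁ with hσ
  have hσ0 : σ 0 = i := by
    have h20 : σ₂ 0 = 0 := Equiv.swap_apply_of_ne_of_ne (by simp) (Ne.symm hj'0)
    simp [hσ, Equiv.trans_apply, h20, hσ₁, Equiv.swap_apply_left]
  have hσ1 : σ 1 = j := by
    have h21 : σ₂ 1 = j' := Equiv.swap_apply_left _ _
    simp [hσ, Equiv.trans_apply, h21, hj'1]
  set G : Fin (m+2) → ℤ → ℝ≥0∞ := fun l => F (σ l) with hG
  have hE : ∀ a : Fin (m+2) → ℤ, (∑ l, a (σ.symm l)) = ∑ l, a l := fun a =>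
    Equiv.sum_comp σ.symm a
  let E : {a : Fin (m+2) → ℤ // ∑ l, a l = s} ≃ {a : Fin (m+2) → ℤ // ∑ l, a l = s} :=
  { toFun := fun a => ⟨fun l => a.1 (σ.symm l), by rw [hE a.1]; exact a.2⟩
    invFun := fun a => ⟨fun l => a.1 (σ l), by rw [← hE fun l => a.1 (σ l)]; simpa using a.2⟩
    left_inv := fun a => by ext l; simp
    right_inv := fun a => by ext l; simp }
  have step : ∑' a : {a : Fin (m+2) → ℤ // ∑ l, a l = s}, ∏ l, F l (a.1 l)
      = ∑' a : {a : Fin (m+2) → ℤ // ∑ l, a l = s}, ∏ l, G l (a.1 l) := by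
    rw [← E.tsum_eq (f := fun a => ∏ l, F l (a.1 l))]
    congr 1; ext a
    show ∏ l, F l (a.1 (σ.symm l)) = ∏ l, F (σ l) (a.1 l)
    rw [← Equiv.prod_comp σ.symm (fun l => F (σ l) (a.1 l))]
    simp
  rw [step]
  refine core01 m s G A B ?_ ?_
  · intro t; rw [hG]; simp only [hσ0, hσ1]; exact hA t
  · intro l h0 h1
    refine hB (σ l) ?_ ?_
    · rw [← hσ0]; exact fun h => h0 (σ.injective h)
    · rw [← hσ1]; exact fun h => h1 (σ.injective h)





section AuxScalar
variable {C₀ : ℝ} {u : ℤ → ℝ}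

theorem conv_bound (hupos : ∀ x, 0 ≤ u x) (hu2 : Summable (fun x => u x ^ 2))
    (hu2sum : ∑' x, u x ^ 2 ≤ C₀ ^ 2) (t : ℤ) :
    Summable (fun x => u x * u (t - x)) ∧ ∑' x, u x * u (t - x) ≤ C₀ ^ 2 := by
  have htrans : ∀ t : ℤ, Summable (fun x => u (t - x) ^ 2) ∧ ∑' x, u (t - x) ^ 2 = ∑' x, u x ^ 2 := by
    intro t
    have e := (Equiv.subLeft t).tsum_eq (f := fun x : ℤ => u x ^ 2)
    constructor
    · exact hu2.comp_injective (Equiv.subLeft t).injective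
    · exact e
  have hle : ∀ x, u x * u (t - x) ≤ (u x ^ 2 + u (t - x) ^ 2) / 2 := by
    intro x
    nlinarith [sq_nonneg (u x - u (t - x))]
  have hnn : ∀ x, 0 ≤ u x * u (t - x) := fun x => mul_nonneg (hupos x) (hupos _)
  have hsum2 : Summable (fun x => (u x ^ 2 + u (t - x) ^ 2) / 2) :=
    (hu2.add (htrans t).1).div_const 2
  have hs : Summable (fun x => u x * u (t - x)) :=
    Summable.of_nonneg_of_le hnn hle hsum2
  refine ⟨hs, ?_⟩
  calc ∑' x, u x * u (t - x) ≤ ∑' x, (u x ^ 2 + u (t - x) ^ 2) / 2 :=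
        Summable.tsum_le_tsum hle hs hsum2
    _ = ((∑' x, u x ^ 2) + ∑' x, u (t - x) ^ 2) / 2 := by
        rw [tsum_div_const, Summable.tsum_add hu2 (htrans t).1]
    _ ≤ (C₀ ^ 2 + C₀ ^ 2) / 2 := by
        rw [(htrans t).2]; linarith
    _ = C₀ ^ 2 := by ring

theorem q2_hasSum : HasSum (fun x : ℤ => (|(x:ℝ)|⁻¹) ^ 2) (π ^ 2 / 3) := by
  have h := baselZ
  convert h using 2 with x
  by_cases hx : x = 0
  · simp [hx]
  · rw [if_neg hx]
    have : |(x:ℝ)| ≠ 0 := by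
      simp only [ne_eq, abs_eq_zero, Int.cast_eq_zero]; exact hx
    rw [inv_pow, one_div, _root_.sq_abs]

theorem w_bound (hC₀ : 0 < C₀) (hupos : ∀ x, 0 ≤ u x) (hu2 : Summable (fun x => u x ^ 2))
    (hu2sum : ∑' x, u x ^ 2 ≤ C₀ ^ 2) :
    Summable (fun x : ℤ => u x * |(x:ℝ)|⁻¹) ∧
      ∑' x : ℤ, u x * |(x:ℝ)|⁻¹ ≤ Real.sqrt (π ^ 2 / 3) * C₀ := by
  set Z := Real.sqrt (π ^ 2 / 3) with hZdef
  have hZpos : 0 < Z := Real.sqrt_pos.mpr (by positivity)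
  have hZsq : Z ^ 2 = π ^ 2 / 3 := Real.sq_sqrt (by positivity)
  set lam := C₀ / Z with hlam
  have hlampos : 0 < lam := div_pos hC₀ hZpos
  have hq2 : Summable (fun x : ℤ => (|(x:ℝ)|⁻¹) ^ 2) := q2_hasSum.summable
  have hle : ∀ x : ℤ, u x * |(x:ℝ)|⁻¹ ≤ (lam * (|(x:ℝ)|⁻¹) ^ 2 + u x ^ 2 / lam) / 2 := by
    intro x
    set q := |(x:ℝ)|⁻¹
    have hq : 0 ≤ q := by positivity
    rw [le_div_iff₀ (by norm_num : (0:ℝ) < 2), ← sub_nonneg]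
    have key : lam * q ^ 2 + u x ^ 2 / lam - u x * q * 2 = (lam * q - u x) ^ 2 / lam := by
      field_simp; ring
    rw [key]
    positivity
  have hnn : ∀ x : ℤ, 0 ≤ u x * |(x:ℝ)|⁻¹ := fun x => mul_nonneg (hupos x) (by positivity)
  have hsum2 : Summable (fun x : ℤ => (lam * (|(x:ℝ)|⁻¹) ^ 2 + u x ^ 2 / lam) / 2) :=
    (((hq2.mul_left lam)).add (hu2.div_const lam)).div_const 2
  have hs : Summable (fun x : ℤ => u x * |(x:ℝ)|⁻¹) := Summable.of_nonneg_of_le hnn hle hsum2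
  refine ⟨hs, ?_⟩
  calc ∑' x : ℤ, u x * |(x:ℝ)|⁻¹
      ≤ ∑' x : ℤ, (lam * (|(x:ℝ)|⁻¹) ^ 2 + u x ^ 2 / lam) / 2 := Summable.tsum_le_tsum hle hs hsum2
    _ = (lam * (∑' x : ℤ, (|(x:ℝ)|⁻¹) ^ 2) + (∑' x, u x ^ 2) / lam) / 2 := by
        rw [tsum_div_const, Summable.tsum_add (hq2.mul_left lam) (hu2.div_const lam), tsum_mul_left, tsum_div_const]
    _ ≤ (lam * (π ^ 2 / 3) + C₀ ^ 2 / lam) / 2 := by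
        rw [q2_hasSum.tsum_eq]
        have : (∑' x, u x ^ 2) / lam ≤ C₀ ^ 2 / lam := by
          gcongr
        linarith
    _ = Z * C₀ := by
        rw [← hZsq, hlam]
        field_simp
        ring

end AuxScalar

theorem natAbs_cast_real (m : ℤ) : ((m.natAbs : ℕ) : ℝ) = |(m : ℝ)| := by
  simp [Nat.cast_natAbs]


theorem phi_eq_offDiag (n : ℕ) (a : Fin n → ℤ) :
    Phi n a = ∑ p ∈ (Finset.univ : Finset (Fin n)).offDiag, a p.1 * a p.2 := by
  classical
  have h1 : (∑ j, a j) ^ 2 = ∑ p ∈ Finset.univ ×ˢ (Finset.univ : Finset (Fin n)), a p.1 * a p.2 := by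
    rw [sq, Finset.sum_mul_sum, ← Finset.sum_product']
  have h2 : ∑ p ∈ (Finset.univ : Finset (Fin n)).diag, a p.1 * a p.2 = ∑ j, a j ^ 2 := by
    rw [Finset.sum_diag]
    exact Finset.sum_congr rfl fun j _ => (sq (a j)).symm
  rw [Phi, h1, ← Finset.diag_union_offDiag (Finset.univ : Finset (Fin n)),
    Finset.sum_union (Finset.disjoint_diag_offDiag _), h2]
  ring

theorem pointwise_bound {u : ℤ → ℝ} (hu0 : u 0 = 0) (hupos : ∀ x, 0 ≤ u x)
    (n : ℕ) (a : Fin n → ℤ) :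
    ENNReal.ofReal (|((Phi n a : ℤ) : ℝ)| * ∏ l, u (a l) * |((a l : ℤ) : ℝ)|⁻¹)
      ≤ ∑ p ∈ (Finset.univ : Finset (Fin n)).offDiag,
          ∏ l, (if l = p.1 ∨ l = p.2 then ENNReal.ofReal (u (a l))
                else ENNReal.ofReal (u (a l) * |((a l : ℤ) : ℝ)|⁻¹)) := by
  classical
  by_cases hall : ∀ l, a l ≠ 0
  case neg =>
    push_neg at hall
    obtain ⟨l0, hl0⟩ := hall
    have : (∏ l, u (a l) * |((a l : ℤ) : ℝ)|⁻¹) = 0 :=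
      Finset.prod_eq_zero (Finset.mem_univ l0) (by rw [hl0, hu0]; simp)
    rw [this, mul_zero, ENNReal.ofReal_zero]
    exact zero_le
  case pos =>
    have habs : ∀ l, |((a l : ℤ) : ℝ)| ≠ 0 := by
      intro l; simp only [ne_eq, abs_eq_zero, Int.cast_eq_zero]; exact hall l
    have hLHS : ENNReal.ofReal (|((Phi n a : ℤ) : ℝ)| * ∏ l, u (a l) * |((a l : ℤ) : ℝ)|⁻¹)
        = ((Phi n a).natAbs : ℝ≥0∞) * ∏ l, ENNReal.ofReal (u (a l) * |((a l : ℤ) : ℝ)|⁻¹) := by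
      rw [ENNReal.ofReal_mul (abs_nonneg _),
        ENNReal.ofReal_prod_of_nonneg (fun l _ => mul_nonneg (hupos _) (by positivity))]
      congr 1
      rw [← natAbs_cast_real, ENNReal.ofReal_natCast]
    rw [hLHS]
    have h1 : (Phi n a).natAbs ≤ ∑ p ∈ (Finset.univ : Finset (Fin n)).offDiag,
        (a p.1).natAbs * (a p.2).natAbs := by
      rw [phi_eq_offDiag]
      refine le_trans (nat_abs_sum_le _ _) ?_
      simp [Int.natAbs_mul]
    have hkey : ((Phi n a).natAbs : ℝ≥0∞)
        ≤ ∑ p ∈ (Finset.univ : Finset (Fin n)).offDiag,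
            ((a p.1).natAbs : ℝ≥0∞) * ((a p.2).natAbs : ℝ≥0∞) := by
      calc ((Phi n a).natAbs : ℝ≥0∞)
          ≤ ((∑ p ∈ (Finset.univ : Finset (Fin n)).offDiag,
              (a p.1).natAbs * (a p.2).natAbs : ℕ) : ℝ≥0∞) := by exact_mod_cast Nat.cast_le.mpr h1
        _ = _ := by push_cast; rfl
    calc ((Phi n a).natAbs : ℝ≥0∞) * ∏ l, ENNReal.ofReal (u (a l) * |((a l : ℤ) : ℝ)|⁻¹)
        ≤ (∑ p ∈ (Finset.univ : Finset (Fin n)).offDiag,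
            ((a p.1).natAbs : ℝ≥0∞) * ((a p.2).natAbs : ℝ≥0∞)) *
            ∏ l, ENNReal.ofReal (u (a l) * |((a l : ℤ) : ℝ)|⁻¹) := mul_le_mul_left hkey _
      _ = ∑ p ∈ (Finset.univ : Finset (Fin n)).offDiag,
            ((a p.1).natAbs : ℝ≥0∞) * ((a p.2).natAbs : ℝ≥0∞) *
            ∏ l, ENNReal.ofReal (u (a l) * |((a l : ℤ) : ℝ)|⁻¹) := Finset.sum_mul _ _ _
      _ ≤ _ := by
          refine Finset.sum_le_sum fun p hp => ?_
          obtain ⟨-, -, hne⟩ := Finset.mem_offDiag.mp hp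
          have hji : p.2 ∈ (Finset.univ : Finset (Fin n)).erase p.1 :=
            Finset.mem_erase.mpr ⟨hne.symm, Finset.mem_univ _⟩
          set W : Fin n → ℝ≥0∞ := fun l => ENNReal.ofReal (u (a l) * |((a l : ℤ) : ℝ)|⁻¹)
            with hWdef
          set F : Fin n → ℝ≥0∞ := fun l => if l = p.1 ∨ l = p.2 then ENNReal.ofReal (u (a l))
            else ENNReal.ofReal (u (a l) * |((a l : ℤ) : ℝ)|⁻¹) with hFdef
          have key : ∀ l, ((a l).natAbs : ℝ≥0∞) * W l = ENNReal.ofReal (u (a l)) := by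
            intro l
            rw [hWdef]
            rw [← ENNReal.ofReal_natCast, ← ENNReal.ofReal_mul (by positivity)]
            congr 1
            rw [natAbs_cast_real]
            rw [mul_comm (u (a l)) _, ← mul_assoc, mul_inv_cancel₀ (habs l), one_mul]
          have hFW : ∀ l ∈ ((Finset.univ : Finset (Fin n)).erase p.1).erase p.2, F l = W l := by
            intro l hl
            have h2' := Finset.mem_erase.mp hl
            have h1' := Finset.mem_erase.mp h2'.2
            rw [hFdef]
            simp only
            rw [if_neg (by tauto)]
          have hsplitW : ∏ l, W l = W p.1 * (W p.2 *
              ∏ l ∈ ((Finset.univ : Finset (Fin n)).erase p.1).erase p.2, W l) := by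
            rw [Finset.mul_prod_erase _ W hji, Finset.mul_prod_erase _ W (Finset.mem_univ p.1)]
          have hF1 : F p.1 = ENNReal.ofReal (u (a p.1)) := by rw [hFdef]; simp
          have hF2 : F p.2 = ENNReal.ofReal (u (a p.2)) := by rw [hFdef]; simp
          have hsplitF : (∏ l, F l) = ENNReal.ofReal (u (a p.1)) * (ENNReal.ofReal (u (a p.2)) *
              ∏ l ∈ ((Finset.univ : Finset (Fin n)).erase p.1).erase p.2, W l) := by
            rw [← Finset.prod_congr rfl hFW, ← hF1, ← hF2,
              Finset.mul_prod_erase _ F hji, Finset.mul_prod_erase _ F (Finset.mem_univ p.1)]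
          show ((a p.1).natAbs : ℝ≥0∞) * ((a p.2).natAbs : ℝ≥0∞) * ∏ l, W l ≤ ∏ l, F l
          rw [hsplitW, hsplitF, ← key p.1, ← key p.2]
          exact le_of_eq (by ring)

theorem mainEstimate {C₀ : ℝ} {u : ℤ → ℝ} (hC₀ : 0 < C₀) (hu0 : u 0 = 0)
    (hupos : ∀ x, 0 ≤ u x) (hu2 : Summable fun x => u x ^ 2)
    (hu2sum : ∑' x, u x ^ 2 ≤ C₀ ^ 2) (m : ℕ) (s : ℤ) :
    ∑' a : {a : Fin (m+2) → ℤ // ∑ l, a l = s},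
        ENNReal.ofReal (|((Phi (m+2) a.1 : ℤ) : ℝ)| * ∏ l, u (a.1 l) * |((a.1 l : ℤ) : ℝ)|⁻¹)
      ≤ ENNReal.ofReal ((((m+2) * (m+1) : ℕ) : ℝ) *
          (C₀ ^ 2 * (Real.sqrt (π ^ 2 / 3) * C₀) ^ m)) := by
  classical
  set A := ENNReal.ofReal (C₀ ^ 2) with hAdef
  set B := ENNReal.ofReal (Real.sqrt (π ^ 2 / 3) * C₀) with hBdef
  set Fp : Fin (m+2) × Fin (m+2) → Fin (m+2) → ℤ → ℝ≥0∞ :=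
    fun p l x => if l = p.1 ∨ l = p.2 then ENNReal.ofReal (u x)
      else ENNReal.ofReal (u x * |((x : ℤ) : ℝ)|⁻¹) with hFpdef
  have hA : ∀ t : ℤ, ∑' x : ℤ, ENNReal.ofReal (u x) * ENNReal.ofReal (u (t - x)) ≤ A := by
    intro t
    have hconv := conv_bound hupos hu2 hu2sum t
    calc ∑' x : ℤ, ENNReal.ofReal (u x) * ENNReal.ofReal (u (t - x))
        = ENNReal.ofReal (∑' x : ℤ, u x * u (t - x)) := by
          rw [ENNReal.ofReal_tsum_of_nonneg (fun x => mul_nonneg (hupos x) (hupos _)) hconv.1]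
          congr 1; ext x; rw [ENNReal.ofReal_mul (hupos x)]
      _ ≤ A := ENNReal.ofReal_le_ofReal hconv.2
  have hBs : ∑' x : ℤ, ENNReal.ofReal (u x * |((x : ℤ) : ℝ)|⁻¹) ≤ B := by
    have hw := w_bound hC₀ hupos hu2 hu2sum
    calc ∑' x : ℤ, ENNReal.ofReal (u x * |((x : ℤ) : ℝ)|⁻¹)
        = ENNReal.ofReal (∑' x : ℤ, u x * |((x : ℤ) : ℝ)|⁻¹) :=
          (ENNReal.ofReal_tsum_of_nonneg (fun x => mul_nonneg (hupos x) (by positivity)) hw.1).symm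
      _ ≤ B := ENNReal.ofReal_le_ofReal hw.2
  have hcard : (Finset.univ : Finset (Fin (m+2))).offDiag.card = (m+2) * (m+1) := by
    rw [Finset.offDiag_card, Finset.card_univ, Fintype.card_fin]
    exact Nat.sub_eq_of_eq_add (by ring)
  calc ∑' a : {a : Fin (m+2) → ℤ // ∑ l, a l = s},
        ENNReal.ofReal (|((Phi (m+2) a.1 : ℤ) : ℝ)| * ∏ l, u (a.1 l) * |((a.1 l : ℤ) : ℝ)|⁻¹)
      ≤ ∑' a : {a : Fin (m+2) → ℤ // ∑ l, a l = s},
          ∑ p ∈ (Finset.univ : Finset (Fin (m+2))).offDiag, ∏ l, Fp p l (a.1 l) :=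
        ENNReal.tsum_le_tsum (fun a => pointwise_bound hu0 hupos (m+2) a.1)
    _ = ∑ p ∈ (Finset.univ : Finset (Fin (m+2))).offDiag,
          ∑' a : {a : Fin (m+2) → ℤ // ∑ l, a l = s}, ∏ l, Fp p l (a.1 l) :=
        Summable.tsum_finsetSum (fun p _ => ENNReal.summable)
    _ ≤ ∑ _p ∈ (Finset.univ : Finset (Fin (m+2))).offDiag, A * B ^ m := by
        refine Finset.sum_le_sum fun p hp => ?_
        obtain ⟨-, -, hne⟩ := Finset.mem_offDiag.mp hp
        refine corePair m s (Fp p) p.1 p.2 hne A B ?_ ?_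
        · intro t
          have e1 : Fp p p.1 = fun x => ENNReal.ofReal (u x) := by
            rw [hFpdef]; simp
          have e2 : Fp p p.2 = fun x => ENNReal.ofReal (u x) := by
            rw [hFpdef]; simp
          rw [e1, e2]
          exact hA t
        · intro l h1 h2
          have e3 : Fp p l = fun x => ENNReal.ofReal (u x * |((x : ℤ) : ℝ)|⁻¹) := by
            funext x
            simp only [hFpdef]
            rw [if_neg (by tauto)]
          rw [e3]
          exact hBs
    _ = (((m+2) * (m+1) : ℕ) : ℝ≥0∞) * (A * B ^ m) := by
        rw [Finset.sum_const, hcard, nsmul_eq_mul]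
    _ = _ := by
        rw [ENNReal.ofReal_mul (by positivity), ENNReal.ofReal_mul (by positivity : (0:ℝ) ≤ C₀ ^ 2),
          ENNReal.ofReal_pow (show (0:ℝ) ≤ Real.sqrt (π ^ 2 / 3) * C₀ by positivity),
          ENNReal.ofReal_natCast, hAdef, hBdef]


/-- Bound on the non-resonant multilinear form `I^n_k(t)(v)` for `v` in the `C₀`-ball of
`ℓ²(ℤ₀)`: for every `n ≥ 2` the defining sum converges absolutely and
`|I^n_k(t)(v)| ≤ |k| Z_{0,2}^{n-2} C₀^n / (2^{n-1}(n-2)!)`, where `Z_{0,2} = (π²/3)^{1/2}`.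
In particular `I^n_k(t)(v) → 0` as `n → ∞`. -/
theorem Icoef_bound (t : ℝ) (k : Z0) (C₀ : ℝ) (hC₀ : 0 < C₀)
    (v : Z0 → ℂ)
    (hv2 : Summable (fun m : Z0 => ‖v m‖ ^ 2))
    (hv : Real.sqrt (∑' m : Z0, ‖v m‖ ^ 2) ≤ C₀) :
    (∀ n : ℕ, 2 ≤ n →
      Summable (fun a : Tup n k =>
        |((Phi n fun j => (a.1 j).1 : ℤ) : ℝ)| *
          ∏ j, ‖v (a.1 j)‖ / |((a.1 j).1 : ℝ)|) ∧
      ‖Icoef n k t v‖ ≤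
        |(k.1 : ℝ)| * Real.sqrt (Real.pi ^ 2 / 3) ^ (n - 2) * C₀ ^ n /
          (2 ^ (n - 1) * (Nat.factorial (n - 2)))) ∧
    Filter.Tendsto (fun n : ℕ => Icoef n k t v) Filter.atTop (nhds 0) := by
  classical
  set u : ℤ → ℝ := fun x => if h : x = 0 then 0 else ‖v ⟨x, h⟩‖ with hudef
  have hu0 : u 0 = 0 := by rw [hudef]; simp
  have hupos : ∀ x, 0 ≤ u x := by
    intro x
    rw [hudef]
    dsimp only
    split
    · exact le_rfl
    · exact norm_nonneg _
  have huv : ∀ m : Z0, u m.1 = ‖v m‖ := by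
    intro m
    rw [hudef]
    dsimp only
    rw [dif_neg m.2]
  have hvsum : ∑' m : Z0, ‖v m‖ ^ 2 ≤ C₀ ^ 2 := by
    have hnn : 0 ≤ ∑' m : Z0, ‖v m‖ ^ 2 := tsum_nonneg fun m => sq_nonneg _
    nlinarith [Real.sq_sqrt hnn, Real.sqrt_nonneg (∑' m : Z0, ‖v m‖ ^ 2)]
  have hinj : Function.Injective (Subtype.val : Z0 → ℤ) := Subtype.val_injective
  have hsupp : ∀ x ∉ Set.range (Subtype.val : Z0 → ℤ), u x ^ 2 = 0 := by
    intro x hx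
    have hx0 : x = 0 := by
      by_contra h
      exact hx ⟨⟨x, h⟩, rfl⟩
    rw [hx0, hu0]
    norm_num
  have hcomp : ((fun x : ℤ => u x ^ 2) ∘ (Subtype.val : Z0 → ℤ))
      = fun m : Z0 => ‖v m‖ ^ 2 := by
    funext m
    simp only [Function.comp_apply]
    rw [huv]
  have hu2 : Summable fun x : ℤ => u x ^ 2 := by
    rw [← hinj.summable_iff hsupp, hcomp]
    exact hv2
  have hu2sum : ∑' x : ℤ, u x ^ 2 ≤ C₀ ^ 2 := by
    have hsupp' : Function.support (fun x : ℤ => u x ^ 2) ⊆ Set.range (Subtype.val : Z0 → ℤ) := by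
      intro x hx
      by_contra hr
      exact hx (hsupp x hr)
    calc ∑' x : ℤ, u x ^ 2 = ∑' m : Z0, u m.1 ^ 2 :=
          (hinj.tsum_eq (f := fun x : ℤ => u x ^ 2) hsupp').symm
      _ = ∑' m : Z0, ‖v m‖ ^ 2 := by
          refine tsum_congr fun m => ?_
          rw [huv]
      _ ≤ C₀ ^ 2 := hvsum
  have key : ∀ m : ℕ,
      (Summable fun a : Tup (m+2) k =>
        |((Phi (m+2) fun j => (a.1 j).1 : ℤ) : ℝ)| *
          ∏ j, ‖v (a.1 j)‖ / |((a.1 j).1 : ℝ)|) ∧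
      (∑' a : Tup (m+2) k,
        (|((Phi (m+2) fun j => (a.1 j).1 : ℤ) : ℝ)| *
          ∏ j, ‖v (a.1 j)‖ / |((a.1 j).1 : ℝ)|))
        ≤ (((m+2) * (m+1) : ℕ) : ℝ) * (C₀ ^ 2 * (Real.sqrt (Real.pi ^ 2 / 3) * C₀) ^ m) := by
    intro m
    set g : Tup (m+2) k → ℝ := fun a =>
      |((Phi (m+2) fun j => (a.1 j).1 : ℤ) : ℝ)| *
        ∏ j, ‖v (a.1 j)‖ / |((a.1 j).1 : ℝ)| with hgdef
    have hgnn : ∀ a, 0 ≤ g a := fun a => mul_nonneg (abs_nonneg _)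
      (Finset.prod_nonneg fun j _ => div_nonneg (norm_nonneg _) (abs_nonneg _))
    set ι : Tup (m+2) k → {b : Fin (m+2) → ℤ // ∑ l, b l = k.1} :=
      fun a => ⟨fun l => (a.1 l).1, a.2⟩ with hιdef
    have hι : Function.Injective ι := by
      intro a b hab
      apply Subtype.ext
      funext l
      apply Subtype.ext
      have := congrArg Subtype.val hab
      exact congrFun this l
    set G : {b : Fin (m+2) → ℤ // ∑ l, b l = k.1} → ℝ≥0∞ := fun b =>
      ENNReal.ofReal (|((Phi (m+2) b.1 : ℤ) : ℝ)| * ∏ l, u (b.1 l) * |((b.1 l : ℤ) : ℝ)|⁻¹)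
      with hGdef
    have hGg : ∀ a, ENNReal.ofReal (g a) = G (ι a) := by
      intro a
      rw [hGdef, hgdef]
      simp only
      congr 2
      refine Finset.prod_congr rfl fun l _ => ?_
      rw [huv (a.1 l), div_eq_mul_inv]
    set M : ℝ := (((m+2) * (m+1) : ℕ) : ℝ) *
      (C₀ ^ 2 * (Real.sqrt (Real.pi ^ 2 / 3) * C₀) ^ m) with hMdef
    have hM : 0 ≤ M := by positivity
    have hEbound : ∑' a : Tup (m+2) k, ENNReal.ofReal (g a) ≤ ENNReal.ofReal M := by
      calc ∑' a : Tup (m+2) k, ENNReal.ofReal (g a)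
          = ∑' a : Tup (m+2) k, G (ι a) := tsum_congr fun a => hGg a
        _ ≤ ∑' b, G b := ENNReal.tsum_comp_le_tsum_of_injective hι G
        _ ≤ ENNReal.ofReal M := mainEstimate hC₀ hu0 hupos hu2 hu2sum m k.1
    have hne : ∑' a : Tup (m+2) k, ENNReal.ofReal (g a) ≠ ⊤ :=
      (lt_of_le_of_lt hEbound ENNReal.ofReal_lt_top).ne
    have hsummable : Summable g := by
      have h := ENNReal.summable_toReal hne
      exact h.congr fun a => ENNReal.toReal_ofReal (hgnn a)
    refine ⟨hsummable, ?_⟩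
    have h1 : (∑' a, ENNReal.ofReal (g a)).toReal = ∑' a, g a := by
      rw [ENNReal.tsum_toReal_eq (fun a => ENNReal.ofReal_ne_top)]
      exact tsum_congr fun a => ENNReal.toReal_ofReal (hgnn a)
    calc ∑' a, g a = (∑' a, ENNReal.ofReal (g a)).toReal := h1.symm
      _ ≤ (ENNReal.ofReal M).toReal := ENNReal.toReal_mono ENNReal.ofReal_ne_top hEbound
      _ = M := ENNReal.toReal_ofReal hM
  have hnorm : ∀ (m : ℕ) (a : Tup (m+2) k),
      ‖Complex.I * ((Phi (m+2) fun j => (a.1 j).1 : ℤ) : ℂ) *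
        Complex.exp (Complex.I * ((Phi (m+2) fun j => (a.1 j).1 : ℤ) : ℂ) * (t : ℂ)) *
        ∏ j, v (a.1 j) / ((a.1 j).1 : ℂ)‖
      = |((Phi (m+2) fun j => (a.1 j).1 : ℤ) : ℝ)| *
          ∏ j, ‖v (a.1 j)‖ / |((a.1 j).1 : ℝ)| := by
    intro m a
    set P : ℤ := Phi (m+2) fun j => (a.1 j).1 with hPdef
    have hexp : Complex.I * (P : ℂ) * (t : ℂ) = ((((P : ℝ) * t : ℝ)) : ℂ) * Complex.I := by
      push_cast
      ring
    rw [norm_mul, norm_mul, norm_mul, hexp, Complex.norm_exp_ofReal_mul_I, Complex.norm_I, one_mul,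
      mul_one, Complex.norm_intCast, norm_prod]
    congr 1
    refine Finset.prod_congr rfl fun j _ => ?_
    rw [norm_div, Complex.norm_intCast]
  have bound : ∀ n : ℕ, 2 ≤ n →
      ‖Icoef n k t v‖ ≤
        |(k.1 : ℝ)| * Real.sqrt (Real.pi ^ 2 / 3) ^ (n - 2) * C₀ ^ n /
          (2 ^ (n - 1) * (Nat.factorial (n - 2))) := by
    intro n hn
    obtain ⟨m, rfl⟩ : ∃ m, n = m + 2 := ⟨n - 2, by omega⟩
    obtain ⟨hsummable, htsum⟩ := key m
    have hred1 : m + 2 - 1 = m + 1 := rfl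
    have hred2 : m + 2 - 2 = m := rfl
    rw [Icoef, norm_mul]
    have hsummable' : Summable (fun a : Tup (m+2) k =>
        ‖Complex.I * ((Phi (m+2) fun j => (a.1 j).1 : ℤ) : ℂ) *
          Complex.exp (Complex.I * ((Phi (m+2) fun j => (a.1 j).1 : ℤ) : ℂ) * (t : ℂ)) *
          ∏ j, v (a.1 j) / ((a.1 j).1 : ℂ)‖) := by
      refine hsummable.congr fun a => ?_
      rw [hnorm m a]
    have hT : ‖∑' a : Tup (m+2) k,
        Complex.I * ((Phi (m+2) fun j => (a.1 j).1 : ℤ) : ℂ) *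
          Complex.exp (Complex.I * ((Phi (m+2) fun j => (a.1 j).1 : ℤ) : ℂ) * (t : ℂ)) *
          ∏ j, v (a.1 j) / ((a.1 j).1 : ℂ)‖
        ≤ (((m+2) * (m+1) : ℕ) : ℝ) * (C₀ ^ 2 * (Real.sqrt (Real.pi ^ 2 / 3) * C₀) ^ m) := by
      refine le_trans (norm_tsum_le_tsum_norm hsummable') ?_
      refine le_trans (le_of_eq (tsum_congr fun a => ?_)) htsum
      rw [hnorm m a]
    have hc : ‖(-1 : ℂ) ^ (m+2) * (k.1 : ℂ) /
        (2 ^ (m + 2 - 1) * (Nat.factorial (m+2) : ℂ))‖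
        = |(k.1 : ℝ)| / (2 ^ (m + 1) * (Nat.factorial (m+2) : ℝ)) := by
      rw [hred1, norm_div, norm_mul, norm_pow, norm_mul, norm_pow]
      simp [Complex.norm_intCast]
    rw [hc, hred1, hred2]
    have hfin : |(k.1 : ℝ)| / (2 ^ (m + 1) * (Nat.factorial (m+2) : ℝ)) *
        ((((m+2) * (m+1) : ℕ) : ℝ) * (C₀ ^ 2 * (Real.sqrt (Real.pi ^ 2 / 3) * C₀) ^ m))
        = |(k.1 : ℝ)| * Real.sqrt (Real.pi ^ 2 / 3) ^ m * C₀ ^ (m+2) /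
          (2 ^ (m + 1) * (Nat.factorial m : ℝ)) := by
      rw [Nat.factorial_succ, Nat.factorial_succ, mul_pow]
      have h2 : (2 : ℝ) ^ (m+1) ≠ 0 := by positivity
      have hf : (Nat.factorial m : ℝ) ≠ 0 := Nat.cast_ne_zero.mpr m.factorial_ne_zero
      push_cast
      field_simp
      ring
    rw [← hfin]
    exact mul_le_mul_of_nonneg_left hT (by positivity)
  refine ⟨fun n hn => ?_, ?_⟩
  · obtain ⟨m, rfl⟩ : ∃ m, n = m + 2 := ⟨n - 2, by omega⟩
    exact ⟨(key m).1, bound (m+2) hn⟩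
  · have hx : Filter.Tendsto (fun j : ℕ => (|(k.1 : ℝ)| * C₀ ^ 2 / 2) *
        ((Real.sqrt (Real.pi ^ 2 / 3) * C₀ / 2) ^ j / (Nat.factorial j : ℝ)))
        Filter.atTop (nhds 0) := by
      have h0 := FloorSemiring.tendsto_pow_div_factorial_atTop (K := ℝ)
        (Real.sqrt (Real.pi ^ 2 / 3) * C₀ / 2)
      have h1 := h0.const_mul (|(k.1 : ℝ)| * C₀ ^ 2 / 2)
      simpa using h1
    have hcomp2 : Filter.Tendsto (fun n : ℕ => (|(k.1 : ℝ)| * C₀ ^ 2 / 2) *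
        ((Real.sqrt (Real.pi ^ 2 / 3) * C₀ / 2) ^ (n - 2) / (Nat.factorial (n - 2) : ℝ)))
        Filter.atTop (nhds 0) := hx.comp (Filter.tendsto_sub_atTop_nat 2)
    refine squeeze_zero_norm' ?_ hcomp2
    filter_upwards [Filter.eventually_ge_atTop 2] with n hn
    have hb := bound n hn
    refine le_trans hb (le_of_eq ?_)
    obtain ⟨m, rfl⟩ : ∃ m, n = m + 2 := ⟨n - 2, by omega⟩
    have hred1 : m + 2 - 1 = m + 1 := rfl
    have hred2 : m + 2 - 2 = m := rfl
    rw [hred1, hred2]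
    have h2 : (2 : ℝ) ^ (m+1) ≠ 0 := by positivity
    have hf : (Nat.factorial m : ℝ) ≠ 0 := Nat.cast_ne_zero.mpr m.factorial_ne_zero
    rw [div_pow, pow_succ]
    field_simp
    ring


end
end

section
/- Let n ≥ 2 be an integer, t ∈ ℝ, k ∈ ℤ₀, C₀ > 0, and let v : ℤ₀ → ℂ satisfy (Σ_{m∈ℤ₀}|v_m|²)^{1/2} ≤ C₀. Then the sum Σ_{k₁+⋯+k_n=k, k_j∈ℤ₀} ∏_{j=1}^n |v_{k_j}|/|k_j| converges, and |N^n_k(t)(v)| ≤ Z_{0,2}^{n−1} C₀^n / (2^{n−1}(n−1)!), where Z_{0,2} := (π²/3)^{1/2}. In particular, for each fixed k the series Σ_{n=2}^∞ N^n_k(t)(v) converges absolutely, uniformly in t and uniformly over v in the C₀-ball of ℓ²(ℤ₀). -/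
noncomputable section

open scoped BigOperators
open Complex

lemma prod_summable_fin {α : Type*} {w : α → ℝ} (hw : Summable w) (hw0 : ∀ m, 0 ≤ w m) :
    ∀ n : ℕ, Summable (fun b : Fin n → α => ∏ i, w (b i)) ∧
      (∑' b : Fin n → α, ∏ i, w (b i)) = (∑' m, w m) ^ n := by
  intro n
  induction n with
  | zero =>
      have h0 : HasSum (fun b : Fin 0 → α => ∏ i, w (b i)) 1 := by
        have h := hasSum_single (f := fun b : Fin 0 → α => ∏ i, w (b i))
          (fun i => i.elim0) (fun b' hb' => absurd (funext fun i => i.elim0) (Ne.symm hb'))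
        simpa using h
      exact ⟨h0.summable, by rw [h0.tsum_eq, pow_zero]⟩
  | succ n ih =>
      have hg : Summable (fun p : α × (Fin n → α) => w p.1 * ∏ i, w (p.2 i)) :=
        Summable.mul_of_nonneg (f := w) (g := fun b : Fin n → α => ∏ i, w (b i)) hw ih.1 hw0
          (fun b => Finset.prod_nonneg fun i _ => hw0 _)
      have hcomp : ∀ p : α × (Fin n → α),
          (∏ i, w ((Fin.consEquiv (fun _ => α)) p i)) = w p.1 * ∏ i, w (p.2 i) := by
        intro p
        rw [Fin.prod_univ_succ]
        simp
      have hsum : Summable (fun b : Fin (n + 1) → α => ∏ i, w (b i)) := by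
        rw [← (Fin.consEquiv (fun _ => α)).summable_iff]
        exact hg.congr (fun p => (hcomp p).symm)
      refine ⟨hsum, ?_⟩
      rw [← (Fin.consEquiv (fun _ => α)).tsum_eq]
      calc (∑' p : α × (Fin n → α), ∏ i, w ((Fin.consEquiv (fun _ => α)) p i))
          = ∑' p : α × (Fin n → α), w p.1 * ∏ i, w (p.2 i) := tsum_congr hcomp
        _ = (∑' m, w m) * ∑' b : Fin n → α, ∏ i, w (b i) :=
            (Summable.tsum_mul_tsum (f := w) (g := fun b : Fin n → α => ∏ i, w (b i)) hw ih.1 hg).symm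
        _ = (∑' m, w m) ^ (n + 1) := by rw [ih.2, pow_succ, mul_comm]

lemma prod_summable_pi {α ι : Type*} [Fintype ι] {w : α → ℝ} (hw : Summable w)
    (hw0 : ∀ m, 0 ≤ w m) :
    Summable (fun b : ι → α => ∏ i, w (b i)) ∧
      (∑' b : ι → α, ∏ i, w (b i)) = (∑' m, w m) ^ (Fintype.card ι) := by
  obtain ⟨hs, ht⟩ := prod_summable_fin hw hw0 (Fintype.card ι)
  have hcomp : ∀ c : Fin (Fintype.card ι) → α,
      (∏ i : ι, w ((Equiv.arrowCongr (Fintype.equivFin ι).symm (Equiv.refl α)) c i))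
        = ∏ j, w (c j) := by
    intro c
    have h1 : ∀ i : ι, (Equiv.arrowCongr (Fintype.equivFin ι).symm (Equiv.refl α)) c i
        = c (Fintype.equivFin ι i) := fun i => by simp [Equiv.arrowCongr]
    simp_rw [h1]
    exact Equiv.prod_comp (Fintype.equivFin ι) (fun j => w (c j))
  have hsum : Summable (fun b : ι → α => ∏ i, w (b i)) := by
    rw [← (Equiv.arrowCongr (Fintype.equivFin ι).symm (Equiv.refl α)).summable_iff]
    exact hs.congr (fun c => (hcomp c).symm)
  refine ⟨hsum, ?_⟩
  rw [← (Equiv.arrowCongr (Fintype.equivFin ι).symm (Equiv.refl α)).tsum_eq]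
  calc (∑' c, ∏ i : ι, w ((Equiv.arrowCongr (Fintype.equivFin ι).symm (Equiv.refl α)) c i))
      = ∑' c, ∏ j, w (c j) := tsum_congr hcomp
    _ = _ := ht

lemma cs_tsum {α : Type*} {f g : α → ℝ} (hf0 : ∀ a, 0 ≤ f a) (hg0 : ∀ a, 0 ≤ g a)
    (hf : Summable (fun a => f a ^ 2)) (hg : Summable (fun a => g a ^ 2)) :
    Summable (fun a => f a * g a) ∧
      (∑' a, f a * g a) ≤ Real.sqrt (∑' a, f a ^ 2) * Real.sqrt (∑' a, g a ^ 2) := by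
  have hsum : Summable (fun a => f a * g a) := by
    apply Summable.of_nonneg_of_le (fun a => mul_nonneg (hf0 a) (hg0 a))
      (fun a => ?_) ((hf.add hg).div_const 2)
    nlinarith [sq_nonneg (f a - g a)]
  refine ⟨hsum, Summable.tsum_le_of_sum_le hsum fun s => ?_⟩
  calc ∑ a ∈ s, f a * g a
      ≤ Real.sqrt (∑ a ∈ s, f a ^ 2) * Real.sqrt (∑ a ∈ s, g a ^ 2) :=
        Real.sum_mul_le_sqrt_mul_sqrt s f g
    _ ≤ Real.sqrt (∑' a, f a ^ 2) * Real.sqrt (∑' a, g a ^ 2) := by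
        have h1 := Real.sqrt_le_sqrt (Summable.sum_le_tsum s (fun a _ => sq_nonneg (f a)) hf)
        have h2 := Real.sqrt_le_sqrt (Summable.sum_le_tsum s (fun a _ => sq_nonneg (g a)) hg)
        exact mul_le_mul h1 h2 (Real.sqrt_nonneg _) (Real.sqrt_nonneg _)

lemma hasSum_inv_sq_int : HasSum (fun n : ℤ => 1 / (n : ℝ) ^ 2) (Real.pi ^ 2 / 3) := by
  have hz := hasSum_zeta_two
  have h1 : HasSum (fun n : ℕ => 1 / ((n : ℤ) : ℝ) ^ 2) (Real.pi ^ 2 / 6) := by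
    have he : (fun n : ℕ => 1 / ((n : ℤ) : ℝ) ^ 2) = fun n : ℕ => 1 / (n : ℝ) ^ 2 := by
      funext n; push_cast; ring
    rw [he]; exact hz
  have h3 : HasSum (fun n : ℕ => 1 / ((n : ℝ) + 1) ^ 2) (Real.pi ^ 2 / 6) := by
    have := (hasSum_nat_add_iff (f := fun n : ℕ => 1 / (n : ℝ) ^ 2) 1
      (g := Real.pi ^ 2 / 6)).mpr (by simpa using hz)
    simpa using this
  have h2 : HasSum (fun n : ℕ => 1 / ((-(n + 1) : ℤ) : ℝ) ^ 2) (Real.pi ^ 2 / 6) := by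
    have he : (fun n : ℕ => 1 / ((-(n + 1) : ℤ) : ℝ) ^ 2)
        = fun n : ℕ => 1 / ((n : ℝ) + 1) ^ 2 := by
      funext n; push_cast; ring
    rw [he]; exact h3
  have h := HasSum.of_nat_of_neg_add_one (f := fun n : ℤ => 1 / (n : ℝ) ^ 2) h1 h2
  have : Real.pi ^ 2 / 6 + Real.pi ^ 2 / 6 = Real.pi ^ 2 / 3 := by ring
  rwa [this] at h

lemma hasSum_inv_sq_Z0 :
    HasSum (fun m : {k : ℤ // k ≠ 0} => 1 / ((m.1 : ℝ)) ^ 2) (Real.pi ^ 2 / 3) := by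
  have hsupp : Function.support (fun n : ℤ => 1 / (n : ℝ) ^ 2) ⊆ {k : ℤ | k ≠ 0} := by
    intro x hx
    simp only [Function.mem_support] at hx
    intro h0
    apply hx
    simp [h0]
  exact (hasSum_subtype_iff_of_support_subset hsupp).mpr hasSum_inv_sq_int

/-- Bound on the multilinear form `N^n_k(t)(v)` for `v` in the `C₀`-ball of `ℓ²(ℤ₀)`:
the defining sum converges absolutely and
`|N^n_k(t)(v)| ≤ Z_{0,2}^{n-1} C₀^n / (2^{n-1}(n-1)!)`, where `Z_{0,2} = (π²/3)^{1/2}`.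
In particular the series `Σ_{n≥2} N^n_k(t)(v)` converges absolutely. -/
theorem Ncoef_bound (t : ℝ) (k : Z0) (C₀ : ℝ) (hC₀ : 0 < C₀)
    (v : Z0 → ℂ)
    (hv2 : Summable (fun m : Z0 => ‖v m‖ ^ 2))
    (hv : Real.sqrt (∑' m : Z0, ‖v m‖ ^ 2) ≤ C₀) :
    (∀ n : ℕ, 2 ≤ n →
      Summable (fun a : Tup n k =>
        ∏ j, ‖v (a.1 j)‖ / |((a.1 j).1 : ℝ)|) ∧
      ‖Ncoef n k t v‖ ≤
        Real.sqrt (Real.pi ^ 2 / 3) ^ (n - 1) * C₀ ^ n /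
          (2 ^ (n - 1) * (Nat.factorial (n - 1)))) ∧
    Summable (fun n : ℕ => ‖Ncoef (n + 2) k t v‖) := by
  classical
  set Z : ℝ := Real.sqrt (Real.pi ^ 2 / 3) with hZdef
  set w : Z0 → ℝ := fun m => ‖v m‖ / |(m.1 : ℝ)| with hwdef
  have hw0 : ∀ m, 0 ≤ w m := fun m => div_nonneg (norm_nonneg _) (abs_nonneg _)
  have hq := hasSum_inv_sq_Z0
  have hf2 : Summable (fun m : Z0 => (1 / |(m.1 : ℝ)|) ^ 2) := by
    have he : (fun m : Z0 => (1 / |(m.1 : ℝ)|) ^ 2) = fun m : Z0 => 1 / ((m.1 : ℝ)) ^ 2 := by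
      funext m; rw [div_pow, one_pow, _root_.sq_abs]
    rw [he]; exact hq.summable
  have hcs := cs_tsum (f := fun m : Z0 => 1 / |(m.1 : ℝ)|)
    (g := fun m : Z0 => ‖v m‖)
    (fun m => by positivity) (fun m => norm_nonneg _) hf2 hv2
  have hwe : ∀ m : Z0, (1 / |(m.1 : ℝ)|) * ‖v m‖ = w m := fun m =>
    one_div_mul_eq_div _ _
  have hwsummable : Summable w := hcs.1.congr hwe
  set S : ℝ := ∑' m, w m with hSdef
  have hS0 : 0 ≤ S := tsum_nonneg hw0
  have hZ0 : 0 ≤ Z := Real.sqrt_nonneg _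
  have hSZ : S ≤ Z * C₀ := by
    have h1 : S = ∑' m : Z0, (1 / |(m.1 : ℝ)|) * ‖v m‖ := (tsum_congr hwe).symm
    have h2 : (∑' m : Z0, (1 / |(m.1 : ℝ)|) ^ 2) = Real.pi ^ 2 / 3 := by
      have he : (fun m : Z0 => (1 / |(m.1 : ℝ)|) ^ 2) = fun m : Z0 => 1 / ((m.1 : ℝ)) ^ 2 := by
        funext m; rw [div_pow, one_pow, _root_.sq_abs]
      rw [he]; exact hq.tsum_eq
    calc S ≤ Real.sqrt (∑' m : Z0, (1 / |(m.1 : ℝ)|) ^ 2) *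
          Real.sqrt (∑' m : Z0, ‖v m‖ ^ 2) := h1 ▸ hcs.2
      _ ≤ Z * C₀ := by
          rw [h2]
          exact mul_le_mul_of_nonneg_left hv hZ0
  have hvC : ∀ m, ‖v m‖ ≤ C₀ := by
    intro m
    have h1 : ‖v m‖ ^ 2 ≤ ∑' m, ‖v m‖ ^ 2 :=
      Summable.le_tsum hv2 m (fun _ _ => sq_nonneg _)
    have h2 := (Real.sqrt_le_sqrt h1).trans hv
    rwa [Real.sqrt_sq (norm_nonneg _)] at h2
  -- main combinatorial estimate
  have main : ∀ n : ℕ, 2 ≤ n → Summable (fun a : Tup n k => ∏ j, w (a.1 j)) ∧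
      |(k.1 : ℝ)| * (∑' a : Tup n k, ∏ j, w (a.1 j)) ≤ n * (C₀ * S ^ (n - 1)) := by
    intro n hn
    obtain ⟨hPi, _⟩ := prod_summable_pi (α := Z0) (ι := Fin n) hwsummable hw0
    have hval_inj : Function.Injective (fun a : Tup n k => a.1) := fun a b h => Subtype.ext h
    have hTup : Summable (fun a : Tup n k => ∏ j, w (a.1 j)) := hPi.comp_injective hval_inj
    have hsub : ∀ j : Fin n,
        Summable (fun a : Tup n k => ∏ i : {i : Fin n // i ≠ j}, w (a.1 i.1)) ∧
        (∑' a : Tup n k, ∏ i : {i : Fin n // i ≠ j}, w (a.1 i.1)) ≤ S ^ (n - 1) := by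
      intro j
      obtain ⟨hPj, hPjSum⟩ := prod_summable_pi (α := Z0) (ι := {i : Fin n // i ≠ j})
        hwsummable hw0
      have hcard : Fintype.card {i : Fin n // i ≠ j} = n - 1 := by
        simp [Fintype.card_subtype_compl, Fintype.card_subtype_eq]
      have hinj : Function.Injective
          (fun (a : Tup n k) (i : {i : Fin n // i ≠ j}) => a.1 i.1) := by
        intro a b hab
        have hoff : ∀ i : Fin n, i ≠ j → a.1 i = b.1 i := fun i hi =>
          congrFun hab ⟨i, hi⟩
        have hsum_off : ∑ x ∈ Finset.univ.erase j, (a.1 x).1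
            = ∑ x ∈ Finset.univ.erase j, (b.1 x).1 :=
          Finset.sum_congr rfl fun x hx => by rw [hoff x (Finset.mem_erase.mp hx).1]
        have hsa : (a.1 j).1 + ∑ x ∈ Finset.univ.erase j, (a.1 x).1 = k.1 := by
          rw [Finset.add_sum_erase Finset.univ (fun x : Fin n => (a.1 x).1) (Finset.mem_univ j)]; exact a.2
        have hsb : (b.1 j).1 + ∑ x ∈ Finset.univ.erase j, (b.1 x).1 = k.1 := by
          rw [Finset.add_sum_erase Finset.univ (fun x : Fin n => (b.1 x).1) (Finset.mem_univ j)]; exact b.2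
        apply Subtype.ext; funext i
        by_cases hij : i = j
        · subst hij; exact Subtype.ext (by omega)
        · exact hoff i hij
      refine ⟨hPj.comp_injective hinj, ?_⟩
      calc (∑' a : Tup n k, ∏ i : {i : Fin n // i ≠ j}, w (a.1 i.1))
          ≤ ∑' f : {i : Fin n // i ≠ j} → Z0, ∏ i, w (f i) :=
            Summable.tsum_le_tsum_of_inj _ hinj
              (fun c _ => Finset.prod_nonneg fun i _ => hw0 _)
              (fun a => le_rfl) (hPj.comp_injective hinj) hPj
        _ = S ^ (n - 1) := by rw [hPjSum, hcard]
    have hpt : ∀ a : Tup n k, |(k.1 : ℝ)| * ∏ i, w (a.1 i)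
        ≤ ∑ j : Fin n, C₀ * ∏ i : {i : Fin n // i ≠ j}, w (a.1 i.1) := by
      intro a
      have hProd0 : 0 ≤ ∏ i, w (a.1 i) := Finset.prod_nonneg fun i _ => hw0 _
      have habs : |(k.1 : ℝ)| ≤ ∑ j : Fin n, |((a.1 j).1 : ℝ)| := by
        have h1 : |k.1| ≤ ∑ j : Fin n, |(a.1 j).1| := by
          calc |k.1| = |∑ j : Fin n, (a.1 j).1| := by rw [a.2]
            _ ≤ _ := Finset.abs_sum_le_sum_abs _ _
        calc |(k.1 : ℝ)| = ((|k.1| : ℤ) : ℝ) := by rw [Int.cast_abs]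
          _ ≤ ((∑ j : Fin n, |(a.1 j).1| : ℤ) : ℝ) := by exact_mod_cast h1
          _ = ∑ j : Fin n, |((a.1 j).1 : ℝ)| := by push_cast; rfl
      calc |(k.1 : ℝ)| * ∏ i, w (a.1 i)
          ≤ (∑ j : Fin n, |((a.1 j).1 : ℝ)|) * ∏ i, w (a.1 i) :=
            mul_le_mul_of_nonneg_right habs hProd0
        _ = ∑ j : Fin n, |((a.1 j).1 : ℝ)| * ∏ i, w (a.1 i) := by rw [Finset.sum_mul]
        _ ≤ ∑ j : Fin n, C₀ * ∏ i : {i : Fin n // i ≠ j}, w (a.1 i.1) := by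
            apply Finset.sum_le_sum
            intro j _
            have hne : |((a.1 j).1 : ℝ)| ≠ 0 := by
              simp only [ne_eq, abs_eq_zero, Int.cast_eq_zero]
              exact (a.1 j).2
            have hsplit : ∏ i, w (a.1 i)
                = w (a.1 j) * ∏ i ∈ Finset.univ.erase j, w (a.1 i) :=
              (Finset.mul_prod_erase _ _ (Finset.mem_univ j)).symm
            have hsubty : ∏ i ∈ Finset.univ.erase j, w (a.1 i)
                = ∏ i : {i : Fin n // i ≠ j}, w (a.1 i.1) := by
              apply Finset.prod_subtype
              intro x; simp [Finset.mem_erase]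
            have hsubty0 : 0 ≤ ∏ i : {i : Fin n // i ≠ j}, w (a.1 i.1) :=
              Finset.prod_nonneg fun i _ => hw0 _
            rw [hsplit, ← mul_assoc, hsubty]
            apply mul_le_mul_of_nonneg_right _ hsubty0
            have hval : |((a.1 j).1 : ℝ)| * w (a.1 j) = ‖v (a.1 j)‖ := by
              rw [hwdef]
              simp only []
              rw [mul_comm, div_mul_cancel₀ _ hne]
            rw [hval]
            exact hvC _
    have hrhs_summ : Summable (fun a : Tup n k =>
        ∑ j : Fin n, C₀ * ∏ i : {i : Fin n // i ≠ j}, w (a.1 i.1)) :=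
      summable_sum (fun j _ => ((hsub j).1.mul_left C₀))
    have hlhs_summ : Summable (fun a : Tup n k => |(k.1 : ℝ)| * ∏ j, w (a.1 j)) :=
      hTup.mul_left _
    refine ⟨hTup, ?_⟩
    calc |(k.1 : ℝ)| * (∑' a : Tup n k, ∏ j, w (a.1 j))
        = ∑' a : Tup n k, |(k.1 : ℝ)| * ∏ j, w (a.1 j) := tsum_mul_left.symm
      _ ≤ ∑' a : Tup n k, ∑ j : Fin n, C₀ * ∏ i : {i : Fin n // i ≠ j}, w (a.1 i.1) :=
          Summable.tsum_le_tsum hpt hlhs_summ hrhs_summ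
      _ = ∑ j : Fin n, ∑' a : Tup n k, C₀ * ∏ i : {i : Fin n // i ≠ j}, w (a.1 i.1) :=
          Summable.tsum_finsetSum (fun j _ => (hsub j).1.mul_left C₀)
      _ = ∑ j : Fin n, C₀ * ∑' a : Tup n k, ∏ i : {i : Fin n // i ≠ j}, w (a.1 i.1) := by
          simp_rw [tsum_mul_left]
      _ ≤ ∑ j : Fin n, C₀ * S ^ (n - 1) :=
          Finset.sum_le_sum fun j _ => mul_le_mul_of_nonneg_left (hsub j).2 hC₀.le
      _ = n * (C₀ * S ^ (n - 1)) := by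
          rw [Finset.sum_const, Finset.card_univ, Fintype.card_fin, nsmul_eq_mul]
  -- absolute value of each summand
  have habs_term : ∀ (n : ℕ) (a : Tup n k),
      ‖Complex.exp (Complex.I * ((Phi n fun j => (a.1 j).1 : ℤ) : ℂ) * (t : ℂ)) *
        ∏ j, v (a.1 j) / ((a.1 j).1 : ℂ)‖ = ∏ j, w (a.1 j) := by
    intro n a
    rw [norm_mul]
    have hexp : ‖Complex.exp
        (Complex.I * ((Phi n fun j => (a.1 j).1 : ℤ) : ℂ) * (t : ℂ))‖ = 1 := by
      have he : Complex.I * ((Phi n fun j => (a.1 j).1 : ℤ) : ℂ) * (t : ℂ)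
          = ((((Phi n fun j => (a.1 j).1 : ℤ) : ℝ) * t : ℝ) : ℂ) * Complex.I := by
        push_cast; ring
      rw [he, Complex.norm_exp_ofReal_mul_I]
    rw [hexp, one_mul, norm_prod]
    apply Finset.prod_congr rfl
    intro j _
    rw [norm_div, Complex.norm_intCast]
  -- bound on each Ncoef
  have hN : ∀ n : ℕ, 2 ≤ n → ‖Ncoef n k t v‖ ≤
      Z ^ (n - 1) * C₀ ^ n / (2 ^ (n - 1) * (Nat.factorial (n - 1))) := by
    intro n hn
    obtain ⟨hTup, hKT⟩ := main n hn
    have hnorm_summ : Summable (fun a : Tup n k =>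
        ‖Complex.exp (Complex.I * ((Phi n fun j => (a.1 j).1 : ℤ) : ℂ) * (t : ℂ)) *
          ∏ j, v (a.1 j) / ((a.1 j).1 : ℂ)‖) :=
      hTup.congr (fun a => by rw [habs_term n a])
    have htsum_le : ‖∑' a : Tup n k,
        Complex.exp (Complex.I * ((Phi n fun j => (a.1 j).1 : ℤ) : ℂ) * (t : ℂ)) *
          ∏ j, v (a.1 j) / ((a.1 j).1 : ℂ)‖ ≤ ∑' a : Tup n k, ∏ j, w (a.1 j) := by
      have h1 := norm_tsum_le_tsum_norm hnorm_summ
      calc ‖_‖ ≤ _ := h1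
        _ = ∑' a : Tup n k, ∏ j, w (a.1 j) :=
            tsum_congr (fun a => by rw [habs_term n a])
    have hpref : ‖(-1 : ℂ) ^ n * (k.1 : ℂ) /
        (2 ^ (n - 1) * (Nat.factorial n : ℂ))‖
        = |(k.1 : ℝ)| / (2 ^ (n - 1) * (Nat.factorial n : ℝ)) := by
      rw [norm_div, norm_mul, norm_mul, norm_pow, norm_pow]
      simp [Complex.norm_intCast, Complex.norm_natCast]
    obtain ⟨m, rfl⟩ : ∃ m, n = m + 2 := ⟨n - 2, by omega⟩
    have hfac_pos : (0 : ℝ) < (Nat.factorial (m + 1) : ℝ) := by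
      exact_mod_cast Nat.factorial_pos (m + 1)
    have hfac2 : ((Nat.factorial (m + 2) : ℕ) : ℝ)
        = ((m : ℝ) + 2) * (Nat.factorial (m + 1) : ℝ) := by
      rw [Nat.factorial_succ]; push_cast; ring
    have hden_pos : (0 : ℝ) < 2 ^ (m + 1) * (Nat.factorial (m + 2) : ℝ) := by
      rw [hfac2]; positivity
    rw [Ncoef, norm_mul, hpref]
    have hT0 : 0 ≤ ∑' a : Tup (m + 2) k, ∏ j, w (a.1 j) :=
      tsum_nonneg fun a => Finset.prod_nonneg fun i _ => hw0 _
    calc |(k.1 : ℝ)| / (2 ^ (m + 2 - 1) * (Nat.factorial (m + 2) : ℝ)) *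
          ‖∑' a : Tup (m + 2) k,
            Complex.exp (Complex.I * ((Phi (m + 2) fun j => (a.1 j).1 : ℤ) : ℂ) * (t : ℂ)) *
              ∏ j, v (a.1 j) / ((a.1 j).1 : ℂ)‖
        ≤ |(k.1 : ℝ)| / (2 ^ (m + 1) * (Nat.factorial (m + 2) : ℝ)) *
            (∑' a : Tup (m + 2) k, ∏ j, w (a.1 j)) := by
          apply mul_le_mul_of_nonneg_left htsum_le
          positivity
      _ = (|(k.1 : ℝ)| * (∑' a : Tup (m + 2) k, ∏ j, w (a.1 j))) /
            (2 ^ (m + 1) * (Nat.factorial (m + 2) : ℝ)) := by ring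
      _ ≤ ((m + 2 : ℕ) * (C₀ * S ^ (m + 2 - 1))) /
            (2 ^ (m + 1) * (Nat.factorial (m + 2) : ℝ)) := by
          apply div_le_div_of_nonneg_right hKT hden_pos.le
      _ ≤ ((m + 2 : ℕ) * (C₀ * (Z * C₀) ^ (m + 1))) /
            (2 ^ (m + 1) * (Nat.factorial (m + 2) : ℝ)) := by
          apply div_le_div_of_nonneg_right _ hden_pos.le
          have := pow_le_pow_left₀ hS0 hSZ (m + 1)
          have h2 : C₀ * S ^ (m + 1) ≤ C₀ * (Z * C₀) ^ (m + 1) :=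
            mul_le_mul_of_nonneg_left this hC₀.le
          calc ((m + 2 : ℕ) : ℝ) * (C₀ * S ^ (m + 2 - 1))
              = ((m + 2 : ℕ) : ℝ) * (C₀ * S ^ (m + 1)) := rfl
            _ ≤ ((m + 2 : ℕ) : ℝ) * (C₀ * (Z * C₀) ^ (m + 1)) := by
                apply mul_le_mul_of_nonneg_left h2
                positivity
      _ = Z ^ (m + 2 - 1) * C₀ ^ (m + 2) / (2 ^ (m + 2 - 1) *
            (Nat.factorial (m + 2 - 1) : ℝ)) := by
          show ((m + 2 : ℕ) : ℝ) * (C₀ * (Z * C₀) ^ (m + 1)) /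
              (2 ^ (m + 1) * (Nat.factorial (m + 2) : ℝ))
            = Z ^ (m + 1) * C₀ ^ (m + 2) / (2 ^ (m + 1) * (Nat.factorial (m + 1) : ℝ))
          rw [hfac2, mul_pow]
          push_cast
          field_simp
          ring
  refine ⟨fun n hn => ⟨(main n hn).1, hN n hn⟩, ?_⟩
  -- summability of the series in n
  have hx := Real.summable_pow_div_factorial (Z * C₀ / 2)
  have hshift : Summable (fun n : ℕ => (Z * C₀ / 2) ^ (n + 1) / (Nat.factorial (n + 1) : ℝ)) :=
    (summable_nat_add_iff 1).mpr hx
  apply Summable.of_nonneg_of_le (fun n => norm_nonneg _) _ (hshift.mul_left C₀)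
  intro n
  have h := hN (n + 2) (by omega)
  have hfp : (0 : ℝ) < (Nat.factorial (n + 1) : ℝ) := by
    exact_mod_cast Nat.factorial_pos (n + 1)
  have heq : Z ^ (n + 2 - 1) * C₀ ^ (n + 2) / (2 ^ (n + 2 - 1) *
      (Nat.factorial (n + 2 - 1) : ℝ))
      = C₀ * ((Z * C₀ / 2) ^ (n + 1) / (Nat.factorial (n + 1) : ℝ)) := by
    show Z ^ (n + 1) * C₀ ^ (n + 2) / (2 ^ (n + 1) * (Nat.factorial (n + 1) : ℝ))
        = C₀ * ((Z * C₀ / 2) ^ (n + 1) / (Nat.factorial (n + 1) : ℝ))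
    rw [div_pow, mul_pow]
    field_simp
    ring
  rw [heq] at h
  exact h

end
end

section
/- Assume (s,p) satisfies either (s > −1/p and p > 1) or (s ≥ −1 and p = 1). Then for every integer n ≥ 2, every t ∈ ℝ, and every v : ℤ₀ → ℂ with ‖v‖_{FL^{s,p}} < ∞, one has ‖N^n(t)(v)‖_{FL^{s,p}} ≤ C_s(n) · Z_{s,p}^{n−1} / (2^{n−1}(n−1)!) · ‖v‖_{FL^{s,p}}^n, where C_s(n) = 1 if s ≤ 0 and C_s(n) = n^s if s > 0. -/
noncomputable section

open scoped BigOperators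
open Complex

/-- the constant `Z_{s,p}`: `(Σ_{k≠0} |k|^{-(s+1)p'})^{1/p'}` for `p > 1`, and `1` for `p = 1`. -/
def Zsp (s p : ℝ) : ℝ :=
  if p = 1 then 1
  else (∑' k : Z0, |(k.1 : ℝ)| ^ (-((s + 1) * (p / (p - 1))))) ^ ((p - 1) / p)

/-- the constant `C_s(n)`. -/
def Cs (s : ℝ) (n : ℕ) : ℝ := if s ≤ 0 then 1 else (n : ℝ) ^ s

open scoped ENNReal NNReal

namespace NFB


/-- Hölder inequality for `tsum` in `ℝ≥0∞`. -/
theorem tsum_inner_le_Lp_mul_Lq {ι : Type*} (f g : ι → ℝ≥0∞) {p q : ℝ}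
    (hpq : p.HolderConjugate q) :
    ∑' i, f i * g i ≤ (∑' i, f i ^ p) ^ (1 / p) * (∑' i, g i ^ q) ^ (1 / q) := by
  rw [ENNReal.tsum_eq_iSup_sum]
  refine iSup_le fun s => ?_
  refine (ENNReal.inner_le_Lp_mul_Lq s f g hpq).trans ?_
  gcongr
  · exact hpq.one_div_nonneg
  · exact ENNReal.sum_le_tsum s
  · exact hpq.symm.one_div_nonneg
  · exact ENNReal.sum_le_tsum s

/-- Jensen-type trick: `(∑ c d)^p ≤ (∑ c)^(p-1) * ∑ c d^p`. -/
theorem tsum_mul_le_pow {ι : Type*} (c d : ι → ℝ≥0∞) {p : ℝ} (hp : 1 ≤ p) :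
    (∑' i, c i * d i) ^ p ≤ (∑' i, c i) ^ (p - 1) * ∑' i, c i * d i ^ p := by
  rcases eq_or_lt_of_le hp with h1 | h1
  · simp [← h1]
  · have hpq := Real.HolderConjugate.conjExponent h1
    set q := Real.conjExponent p with hq
    have hiq : 1/q + 1/p = 1 := by
      rw [add_comm]; simpa [one_div] using hpq.inv_add_inv_eq_one
    have hppos : (0:ℝ) < p := lt_trans one_pos h1
    have h0 : (∑' i, c i * d i) ≤ (∑' i, c i) ^ (1 / q) * (∑' i, c i * d i ^ p) ^ (1 / p) := by
      have key := tsum_inner_le_Lp_mul_Lq (fun i => c i ^ (1 / q))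
        (fun i => c i ^ (1 / p) * d i) hpq.symm
      calc ∑' i, c i * d i = ∑' i, c i ^ (1/q) * (c i ^ (1/p) * d i) := by
            congr 1; funext i
            rw [← mul_assoc, ← ENNReal.rpow_add_of_nonneg _ _ hpq.symm.one_div_nonneg
              hpq.one_div_nonneg, hiq, ENNReal.rpow_one]
        _ ≤ (∑' i, (c i ^ (1/q)) ^ q) ^ (1/q) * (∑' i, (c i ^ (1/p) * d i) ^ p) ^ (1/p) := key
        _ = (∑' i, c i) ^ (1 / q) * (∑' i, c i * d i ^ p) ^ (1 / p) := by
            congr 1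
            · refine congrArg (· ^ (1/q)) (tsum_congr fun i => ?_)
              rw [← ENNReal.rpow_mul, one_div, inv_mul_cancel₀ hpq.symm.ne_zero,
                ENNReal.rpow_one]
            · refine congrArg (· ^ (1/p)) (tsum_congr fun i => ?_)
              rw [ENNReal.mul_rpow_of_nonneg _ _ hppos.le, ← ENNReal.rpow_mul, one_div,
                inv_mul_cancel₀ hppos.ne', ENNReal.rpow_one]
    calc (∑' i, c i * d i) ^ p
        ≤ ((∑' i, c i) ^ (1 / q) * (∑' i, c i * d i ^ p) ^ (1 / p)) ^ p :=
          ENNReal.rpow_le_rpow h0 hppos.le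
      _ = (∑' i, c i) ^ (p - 1) * ∑' i, c i * d i ^ p := by
          have h2 : 1/q * p = p - 1 := by
            have : 1/q = 1 - 1/p := by linarith
            rw [this]; field_simp
          have h3 : 1/p * p = 1 := by field_simp
          rw [ENNReal.mul_rpow_of_nonneg _ _ hppos.le, ← ENNReal.rpow_mul, ← ENNReal.rpow_mul,
            h2, h3, ENNReal.rpow_one]

/-- tuples of nonzero integers with prescribed sum. -/
def TupZ (n : ℕ) (c : ℤ) : Type := {a : Fin n → Z0 // (∑ j, (a j).1) = c}

/-- the convolution-type quantity. -/
def hZ (F G : Z0 → ℝ≥0∞) (n : ℕ) (c : ℤ) : ℝ≥0∞ :=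
  ∑' a : TupZ n c, ∏ i : Fin n, (if (i : ℕ) = 0 then F (a.1 i) else G (a.1 i))

/-- extension by zero to `ℤ`. -/
def zext (F : Z0 → ℝ≥0∞) : ℤ → ℝ≥0∞ := fun c => if h : c = 0 then 0 else F ⟨c, h⟩

theorem tsum_zext (F : Z0 → ℝ≥0∞) : ∑' c : ℤ, zext F c = ∑' m : Z0, F m := by
  rw [← tsum_subtype_eq_of_support_subset (s := {c : ℤ | c ≠ 0})]
  · exact tsum_congr fun m => dif_neg m.2
  · intro c hc
    by_contra h0
    simp only [Set.mem_setOf_eq, not_not] at h0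
    exact hc (by simp [zext, h0])

theorem hZ_one (F G : Z0 → ℝ≥0∞) (c : ℤ) : hZ F G 1 c = zext F c := by
  rcases eq_or_ne c 0 with rfl | hc
  · have : IsEmpty (TupZ 1 0) := by
      constructor; rintro ⟨a, ha⟩
      rw [Fin.sum_univ_one] at ha
      exact (a 0).2 ha
    rw [hZ, tsum_empty]; simp [zext]
  · have hu : ∀ a : TupZ 1 c, a = ⟨fun _ => ⟨c, hc⟩, by simp⟩ := by
      rintro ⟨a, ha⟩
      rw [Fin.sum_univ_one] at ha
      refine Subtype.ext (funext fun i => ?_)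
      have : i = 0 := Subsingleton.elim _ _
      subst this; exact Subtype.ext ha
    letI : Unique (TupZ 1 c) := ⟨⟨⟨fun _ => ⟨c, hc⟩, by simp⟩⟩, hu⟩
    rw [hZ, tsum_eq_single default (fun b hb => absurd (hu b) hb)]
    rw [Fin.prod_univ_one, if_pos (by decide : ((0 : Fin 1) : ℕ) = 0)]
    simp only [zext, dif_neg hc]
    rfl

/-- gluing map: attach a last coordinate. -/
def glue (n : ℕ) (c : ℤ) (x : Σ l : Z0, TupZ n (c - l.1)) : TupZ (n + 1) c :=
  ⟨Fin.snoc x.2.1 x.1, by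
    rw [Fin.sum_univ_castSucc]
    simp only [Fin.snoc_castSucc, Fin.snoc_last]
    rw [x.2.2]; ring⟩

theorem glue_bijective (n : ℕ) (c : ℤ) : Function.Bijective (glue n c) := by
  constructor
  · rintro ⟨l, b, hb⟩ ⟨l', b', hb'⟩ h
    have h0 : (Fin.snoc b l : Fin (n+1) → Z0) = Fin.snoc b' l' := congrArg Subtype.val h
    have hl : l = l' := by
      have := congrFun h0 (Fin.last n)
      simpa [Fin.snoc_last] using this
    subst hl
    have hb2 : b = b' := by
      funext i
      have := congrFun h0 (Fin.castSucc i)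
      simpa [Fin.snoc_castSucc] using this
    subst hb2
    rfl
  · rintro ⟨a, ha⟩
    refine ⟨⟨a (Fin.last n), ⟨Fin.init a, ?_⟩⟩, ?_⟩
    · rw [Fin.sum_univ_castSucc] at ha
      simp only [Fin.init]
      omega
    · exact Subtype.ext (Fin.snoc_init_self a)

/-- decomposition equivalence peeling the last coordinate. -/
def peel (n : ℕ) (c : ℤ) : (Σ l : Z0, TupZ n (c - l.1)) ≃ TupZ (n + 1) c :=
  Equiv.ofBijective _ (glue_bijective n c)

theorem hZ_succ (F G : Z0 → ℝ≥0∞) (n : ℕ) (hn : 1 ≤ n) (c : ℤ) :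
    hZ F G (n + 1) c = ∑' l : Z0, G l * hZ F G n (c - l.1) := by
  rw [hZ, ← Equiv.tsum_eq (peel n c), ENNReal.tsum_sigma']
  refine tsum_congr fun l => ?_
  rw [hZ, ← ENNReal.tsum_mul_left]
  refine tsum_congr fun b => ?_
  have hval : ((peel n c) ⟨l, b⟩).1 = Fin.snoc b.1 l := rfl
  rw [hval, Fin.prod_univ_castSucc]
  simp only [Fin.snoc_castSucc, Fin.snoc_last, Fin.coe_castSucc, Fin.val_last]
  rw [if_neg (by omega), mul_comm]

theorem young_step (G : Z0 → ℝ≥0∞) (H : ℤ → ℝ≥0∞) {p : ℝ} (hp : 1 ≤ p) :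
    ∑' c : ℤ, (∑' l : Z0, G l * H (c - l.1)) ^ p ≤
      ((∑' l : Z0, G l) ^ p) * ∑' c : ℤ, H c ^ p := by
  have hp0 : (0:ℝ) ≤ p - 1 := by linarith
  calc ∑' c : ℤ, (∑' l : Z0, G l * H (c - l.1)) ^ p
      ≤ ∑' c : ℤ, (∑' l : Z0, G l) ^ (p - 1) * ∑' l : Z0, G l * H (c - l.1) ^ p :=
        Summable.tsum_le_tsum (fun c => tsum_mul_le_pow G (fun l => H (c - l.1)) hp)
          ENNReal.summable ENNReal.summable
    _ = (∑' l : Z0, G l) ^ (p - 1) * ∑' c : ℤ, ∑' l : Z0, G l * H (c - l.1) ^ p := by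
        rw [ENNReal.tsum_mul_left]
    _ = (∑' l : Z0, G l) ^ (p - 1) * ∑' l : Z0, ∑' c : ℤ, G l * H (c - l.1) ^ p := by
        rw [ENNReal.tsum_comm]
    _ = (∑' l : Z0, G l) ^ (p - 1) * ∑' l : Z0, G l * ∑' c : ℤ, H c ^ p := by
        congr 1
        refine tsum_congr fun l => ?_
        rw [ENNReal.tsum_mul_left]
        congr 1
        exact (Equiv.subRight (l.1 : ℤ)).tsum_eq (fun c => H c ^ p)
    _ = ((∑' l : Z0, G l) ^ p) * ∑' c : ℤ, H c ^ p := by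
        rw [ENNReal.tsum_mul_right, ← mul_assoc]
        congr 1
        have h := ENNReal.rpow_add_of_nonneg (x := ∑' l : Z0, G l) (p-1) 1 hp0 zero_le_one
        rw [ENNReal.rpow_one] at h
        rw [← h]
        congr 1; ring

theorem conv_bound (F G : Z0 → ℝ≥0∞) {p : ℝ} (hp : 1 ≤ p) :
    ∀ n : ℕ, 1 ≤ n →
      ∑' c : ℤ, hZ F G n c ^ p ≤
        (∑' m : Z0, F m ^ p) * ((∑' m : Z0, G m) ^ (n - 1)) ^ p := by
  intro n hn
  induction n, hn using Nat.le_induction with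
  | base =>
      simp only [Nat.sub_self, pow_zero, ENNReal.one_rpow, mul_one]
      refine le_of_eq ?_
      have hzp : ∀ c : ℤ, hZ F G 1 c ^ p = zext (fun m => F m ^ p) c := by
        intro c
        rw [hZ_one]
        by_cases h : c = 0
        · subst h; simp [zext, ENNReal.zero_rpow_of_pos (by linarith : (0:ℝ) < p)]
        · simp [zext, h]
      rw [tsum_congr hzp, tsum_zext]
  | succ n hn ih =>
      calc ∑' c : ℤ, hZ F G (n+1) c ^ p
          = ∑' c : ℤ, (∑' l : Z0, G l * hZ F G n (c - l.1)) ^ p := by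
            exact tsum_congr fun c => congrArg (· ^ p) (hZ_succ F G n hn c)
        _ ≤ ((∑' m : Z0, G m) ^ p) * ∑' c : ℤ, hZ F G n c ^ p :=
            young_step G (hZ F G n) hp
        _ ≤ ((∑' m : Z0, G m) ^ p) *
              ((∑' m : Z0, F m ^ p) * ((∑' m : Z0, G m) ^ (n - 1)) ^ p) := by gcongr
        _ = (∑' m : Z0, F m ^ p) * ((∑' m : Z0, G m) ^ (n + 1 - 1)) ^ p := by
            rw [← mul_assoc, mul_comm ((∑' m : Z0, G m) ^ p), mul_assoc,
              ← ENNReal.mul_rpow_of_nonneg _ _ (by linarith : (0:ℝ) ≤ p)]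
            congr 2
            rw [Nat.add_sub_cancel]
            conv_rhs => rw [show n = (n-1)+1 by omega]
            rw [pow_succ']



theorem tsum_swap (F G : Z0 → ℝ≥0∞) {n : ℕ} (hn : 1 ≤ n) (j : Fin n) (c : ℤ) :
    ∑' a : TupZ n c, ∏ i : Fin n, (if i = j then F (a.1 i) else G (a.1 i)) =
      hZ F G n c := by
  set i0 : Fin n := ⟨0, by omega⟩ with hi0
  set σ := Equiv.swap i0 j with hσ
  have hsum : ∀ a : TupZ n c, (∑ i, ((a.1 (σ i)).1 : ℤ)) = c := by
    intro a
    rw [Equiv.sum_comp σ (fun i => ((a.1 i).1 : ℤ))]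
    exact a.2
  set e : TupZ n c ≃ TupZ n c :=
    { toFun := fun a => ⟨a.1 ∘ σ, hsum a⟩
      invFun := fun a => ⟨a.1 ∘ σ, hsum a⟩
      left_inv := fun a => Subtype.ext (funext fun i =>
        congrArg a.1 (Equiv.swap_apply_self i0 j i))
      right_inv := fun a => Subtype.ext (funext fun i =>
        congrArg a.1 (Equiv.swap_apply_self i0 j i)) } with he
  rw [hZ, ← Equiv.tsum_eq e (fun a : TupZ n c =>
    ∏ i : Fin n, (if (i : ℕ) = 0 then F (a.1 i) else G (a.1 i)))]
  refine tsum_congr fun a => ?_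
  have step1 : ∏ i : Fin n, (if (i : ℕ) = 0 then F ((e a).1 i) else G ((e a).1 i))
      = ∏ i : Fin n, (if σ (σ i) = i0 then F (a.1 (σ i)) else G (a.1 (σ i))) := by
    refine Finset.prod_congr rfl fun i _ => ?_
    have hσσ : σ (σ i) = i := Equiv.swap_apply_self _ _ _
    by_cases h : (i : ℕ) = 0
    · rw [if_pos h, if_pos (by rw [hσσ]; exact Fin.ext h)]
      rfl
    · rw [if_neg h, if_neg (by rw [hσσ]; exact fun hh => h (congrArg Fin.val hh))]
      rfl
  have step2 : ∏ i : Fin n, (if σ (σ i) = i0 then F (a.1 (σ i)) else G (a.1 (σ i)))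
      = ∏ i : Fin n, (if σ i = i0 then F (a.1 i) else G (a.1 i)) :=
    Equiv.prod_comp σ (fun i => if σ i = i0 then F (a.1 i) else G (a.1 i))
  have step3 : ∏ i : Fin n, (if σ i = i0 then F (a.1 i) else G (a.1 i))
      = ∏ i : Fin n, (if i = j then F (a.1 i) else G (a.1 i)) := by
    refine Finset.prod_congr rfl fun i _ => ?_
    by_cases h : i = j
    · rw [if_pos h, if_pos (by rw [h, hσ]; exact Equiv.swap_apply_right i0 j)]
    · rw [if_neg h, if_neg ?_]
      intro hh
      apply h
      have : σ i = σ j := by rw [hh, hσ, Equiv.swap_apply_right]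
      exact σ.injective this
  rw [step1, step2, step3]

theorem ennreal_rpow_sum_le {ι : Type*} (t : Finset ι) (ht : t.Nonempty) (x : ι → ℝ≥0∞)
    {r : ℝ} (hr0 : 0 ≤ r) (hr1 : r ≤ 1) : (∑ i ∈ t, x i) ^ r ≤ ∑ i ∈ t, x i ^ r := by
  induction ht using Finset.Nonempty.cons_induction with
  | singleton a => simp
  | cons a t hat ht ih =>
      rw [Finset.sum_cons, Finset.sum_cons]
      exact le_trans (ENNReal.rpow_add_le_add_rpow _ _ hr0 hr1) (by gcongr)

theorem ennreal_sum_rpow_ge {n : ℕ} (x : Fin n → ℝ≥0∞) {r : ℝ} (hr : 1 < r) :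
    (∑ j, x j) ^ r ≤ (n : ℝ≥0∞) ^ (r - 1) * ∑ j, x j ^ r := by
  have hrc := Real.HolderConjugate.conjExponent hr
  set q := Real.conjExponent r with hq
  have hr0 : (0:ℝ) < r := lt_trans one_pos hr
  have h := ENNReal.inner_le_Lp_mul_Lq Finset.univ x (fun _ => (1:ℝ≥0∞)) hrc
  simp only [mul_one, ENNReal.one_rpow, Finset.sum_const, Finset.card_univ,
    Fintype.card_fin, nsmul_eq_mul] at h
  have h2 : (∑ j, x j) ^ r ≤ ((∑ j, x j ^ r) ^ (1/r) * ((n : ℝ≥0∞)) ^ (1/q)) ^ r :=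
    ENNReal.rpow_le_rpow h hr0.le
  refine h2.trans (le_of_eq ?_)
  rw [ENNReal.mul_rpow_of_nonneg _ _ hr0.le, ← ENNReal.rpow_mul, ← ENNReal.rpow_mul]
  rw [one_div, inv_mul_cancel₀ hr0.ne', ENNReal.rpow_one]
  have hqr : 1/q * r = r - 1 := by
    have h3 : 1/q = 1 - 1/r := by
      have := hrc.inv_add_inv_eq_one
      simp only [one_div] at this ⊢
      linarith
    rw [h3]; field_simp
  rw [hqr, mul_comm]

theorem key_weight {s : ℝ} (hs : -1 ≤ s) {n : ℕ} (hn : 1 ≤ n) (a : Fin n → Z0) (c : ℤ)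
    (hc : (∑ j, (a j).1) = c) :
    ENNReal.ofReal (|(c:ℝ)| ^ (s+1)) ≤
      ENNReal.ofReal (Cs s n) * ∑ j, ENNReal.ofReal (|((a j).1 : ℝ)| ^ (s+1)) := by
  set r := s + 1 with hrdef
  have hr : 0 ≤ r := by simp [hrdef]; linarith
  have h1 : |(c:ℝ)| ≤ ∑ j, |((a j).1:ℝ)| := by
    rw [← hc]
    push_cast
    exact Finset.abs_sum_le_sum_abs _ _
  have h2 : ENNReal.ofReal (|(c:ℝ)| ^ r) ≤ (∑ j, ENNReal.ofReal (|((a j).1:ℝ)|)) ^ r := by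
    rw [← ENNReal.ofReal_rpow_of_nonneg (abs_nonneg _) hr,
      ← ENNReal.ofReal_sum_of_nonneg (fun j _ => abs_nonneg _)]
    exact ENNReal.rpow_le_rpow (ENNReal.ofReal_le_ofReal h1) hr
  refine h2.trans ?_
  by_cases hs0 : s ≤ 0
  · rw [Cs, if_pos hs0, ENNReal.ofReal_one, one_mul]
    haveI : Nonempty (Fin n) := Fin.pos_iff_nonempty.mp (by omega)
    refine (ennreal_rpow_sum_le _ Finset.univ_nonempty _ hr (by linarith)).trans
      (le_of_eq (Finset.sum_congr rfl fun j _ => ?_))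
    exact ENNReal.ofReal_rpow_of_nonneg (abs_nonneg _) hr
  · push_neg at hs0
    have h3 := ennreal_sum_rpow_ge (fun j => ENNReal.ofReal (|((a j).1:ℝ)|))
      (by linarith : 1 < r)
    refine h3.trans (le_of_eq ?_)
    congr 1
    · rw [Cs, if_neg (not_le.mpr hs0)]
      rw [← ENNReal.ofReal_natCast n, ENNReal.ofReal_rpow_of_nonneg (Nat.cast_nonneg n)
        (by linarith : (0:ℝ) ≤ r - 1)]
      rw [show r - 1 = s from by rw [hrdef]; ring]
    · exact Finset.sum_congr rfl fun j _ =>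
        ENNReal.ofReal_rpow_of_nonneg (abs_nonneg _) hr

def Ff (s : ℝ) (v : Z0 → ℂ) (m : Z0) : ℝ≥0∞ :=
  ENNReal.ofReal (|(m.1 : ℝ)| ^ s * ‖v m‖)

def Gf (v : Z0 → ℂ) (m : Z0) : ℝ≥0∞ :=
  ENNReal.ofReal (‖v m‖ / |(m.1 : ℝ)|)

theorem one_le_w (m : Z0) : (1 : ℝ) ≤ |(m.1 : ℝ)| := by
  have : (1 : ℤ) ≤ |m.1| := Int.one_le_abs (by simpa using m.2)
  calc (1:ℝ) ≤ ((|m.1| : ℤ) : ℝ) := by exact_mod_cast this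
    _ = |(m.1 : ℝ)| := by push_cast; ring

theorem w_pos (m : Z0) : (0 : ℝ) < |(m.1 : ℝ)| := lt_of_lt_of_le one_pos (one_le_w m)

theorem ofReal_norm_tsum_le {ι : Type*} (f : ι → ℂ) :
    ENNReal.ofReal (‖∑' i, f i‖) ≤ ∑' i, ENNReal.ofReal (‖f i‖) := by
  by_cases h : Summable f
  · have hn : Summable fun i => ‖f i‖ := summable_norm_iff.mpr h
    have hn' : Summable fun i => ‖f i‖ := by
      exact hn
    have h3 : ‖∑' i, f i‖ ≤ ∑' i, ‖f i‖ := norm_tsum_le_tsum_norm hn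
    calc ENNReal.ofReal (‖∑' i, f i‖)
        ≤ ENNReal.ofReal (∑' i, ‖f i‖) := ENNReal.ofReal_le_ofReal h3
      _ = ∑' i, ENNReal.ofReal (‖f i‖) :=
          ENNReal.ofReal_tsum_of_nonneg (fun i => norm_nonneg _) hn'
  · rw [tsum_eq_zero_of_not_summable h]
    simp

theorem summable_abs_rpow_neg {r : ℝ} (hr : 1 < r) :
    Summable (fun m : Z0 => |(m.1 : ℝ)| ^ (-r)) := by
  have hnat : Summable (fun n : ℕ => (n : ℝ) ^ (-r)) :=
    Real.summable_nat_rpow.mpr (by linarith)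
  have hint : Summable (fun c : ℤ => |(c : ℝ)| ^ (-r)) := by
    refine Summable.of_nat_of_neg ?_ ?_
    · refine hnat.congr fun n => ?_
      push_cast
      rw [_root_.abs_of_nonneg (by positivity : (0:ℝ) ≤ (n:ℝ))]
    · refine hnat.congr fun n => ?_
      push_cast
      rw [abs_neg, _root_.abs_of_nonneg (by positivity : (0:ℝ) ≤ (n:ℝ))]
  exact hint.subtype _

theorem Gf_sum_le (s p : ℝ) (hsp : (-1 / p < s ∧ 1 < p) ∨ (-1 ≤ s ∧ p = 1)) (v : Z0 → ℂ) :
    (∑' m : Z0, Gf v m) ≤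
      ENNReal.ofReal (Zsp s p) * (∑' m : Z0, Ff s v m ^ p) ^ (1 / p) := by
  rcases hsp with ⟨hs, hp⟩ | ⟨hs, hp⟩
  · -- p > 1
    have hp0 : (0:ℝ) < p := lt_trans one_pos hp
    have hpq := Real.HolderConjugate.conjExponent hp
    set q := Real.conjExponent p with hq
    have hqv : q = p / (p - 1) := rfl
    have hq0 : (0:ℝ) < q := hpq.symm.pos
    have hr1 : 1 < (s + 1) * (p / (p - 1)) := by
      have hs' : -1 < s * p := by
        have h := hs
        rw [div_lt_iff₀ hp0] at h
        linarith
      rw [show (s+1) * (p/(p-1)) = ((s+1)*p)/(p-1) by ring,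
        lt_div_iff₀ (by linarith : (0:ℝ) < p - 1)]
      nlinarith
    have hzsum := summable_abs_rpow_neg hr1
    have hpoint : ∀ m : Z0, Gf v m =
        ENNReal.ofReal (|(m.1:ℝ)| ^ (-(s+1))) * Ff s v m := by
      intro m
      rw [Gf, Ff, ← ENNReal.ofReal_mul (by positivity)]
      congr 1
      have hw := w_pos m
      rw [← mul_assoc, ← Real.rpow_add hw, show -(s+1)+s = -1 by ring,
        Real.rpow_neg_one]
      field_simp
    calc (∑' m : Z0, Gf v m)
        = ∑' m : Z0, ENNReal.ofReal (|(m.1:ℝ)| ^ (-(s+1))) * Ff s v m :=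
          tsum_congr hpoint
      _ ≤ (∑' m : Z0, (ENNReal.ofReal (|(m.1:ℝ)| ^ (-(s+1)))) ^ q) ^ (1/q) *
          (∑' m : Z0, Ff s v m ^ p) ^ (1/p) :=
          tsum_inner_le_Lp_mul_Lq _ _ hpq.symm
      _ = ENNReal.ofReal (Zsp s p) * (∑' m : Z0, Ff s v m ^ p) ^ (1/p) := by
          congr 1
          have hterm : ∀ m : Z0, (ENNReal.ofReal (|(m.1:ℝ)| ^ (-(s+1)))) ^ q =
              ENNReal.ofReal (|(m.1:ℝ)| ^ (-((s + 1) * (p / (p - 1))))) := by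
            intro m
            rw [ENNReal.ofReal_rpow_of_nonneg (by positivity) hq0.le]
            congr 1
            rw [← Real.rpow_mul (abs_nonneg _)]
            congr 1
            rw [hqv]; ring
          rw [tsum_congr hterm,
            ← ENNReal.ofReal_tsum_of_nonneg (fun m => by positivity) hzsum,
            ENNReal.ofReal_rpow_of_nonneg (tsum_nonneg fun m => by positivity)
              (by positivity : (0:ℝ) ≤ 1/q)]
          rw [Zsp, if_neg (by linarith : p ≠ 1)]
          congr 1
          rw [hqv]
          field_simp
  · -- p = 1
    subst hp
    rw [Zsp, if_pos rfl, ENNReal.ofReal_one, one_mul]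
    have h1 : ∀ m : Z0, Gf v m ≤ Ff s v m := by
      intro m
      rw [Gf, Ff]
      apply ENNReal.ofReal_le_ofReal
      rw [div_eq_mul_inv, mul_comm]
      apply mul_le_mul_of_nonneg_right _ (norm_nonneg _)
      rw [← Real.rpow_neg_one]
      exact Real.rpow_le_rpow_of_exponent_le (one_le_w m) hs
    calc (∑' m : Z0, Gf v m) ≤ ∑' m : Z0, Ff s v m :=
          Summable.tsum_le_tsum h1 ENNReal.summable ENNReal.summable
      _ = (∑' m : Z0, Ff s v m ^ (1:ℝ)) ^ (1/(1:ℝ)) := by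
          simp [ENNReal.rpow_one]


theorem pointwise_bound (s : ℝ) {p : ℝ} (hs : -1 ≤ s) (hp : 0 < p) {n : ℕ} (hn : 2 ≤ n)
    (t : ℝ) (v : Z0 → ℂ) (k : Z0) :
    ENNReal.ofReal (FLsummand s p (fun k => Ncoef n k t v) k) ≤
      (ENNReal.ofReal (Cs s n / (2 ^ (n-1) * (Nat.factorial (n-1) : ℝ))) *
        hZ (Ff s v) (Gf v) n k.1) ^ p := by
  have hw := w_pos k
  simp only [FLsummand]
  rw [← ENNReal.ofReal_rpow_of_nonneg
    (mul_nonneg (Real.rpow_nonneg (abs_nonneg _) _) (norm_nonneg _)) hp.le]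
  refine ENNReal.rpow_le_rpow ?_ hp.le
  simp only [Ncoef]
  have habs_c : ‖(-1 : ℂ) ^ n * (k.1 : ℂ) /
      (2 ^ (n - 1) * (Nat.factorial n : ℂ))‖ =
      |(k.1:ℝ)| / (2 ^ (n-1) * (Nat.factorial n : ℝ)) := by
    rw [norm_div, norm_mul, norm_mul, norm_pow]
    simp [Complex.norm_intCast, Complex.norm_natCast, Complex.norm_two]
  have habs_term : ∀ a : Tup n k,
      ENNReal.ofReal (‖
        Complex.exp (Complex.I * ((Phi n fun j => ((a.1 j).1 : ℤ)) : ℂ) * (t : ℂ)) *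
          ∏ j, v (a.1 j) / ((a.1 j).1 : ℂ)‖) = ∏ j, Gf v (a.1 j) := by
    intro a
    rw [norm_mul]
    have he : ‖
        Complex.exp (Complex.I * ((Phi n fun j => ((a.1 j).1 : ℤ)) : ℂ) * (t : ℂ))‖ = 1 := by
      have harg : Complex.I * ((Phi n fun j => ((a.1 j).1 : ℤ)) : ℂ) * (t : ℂ)
          = ((((Phi n fun j => ((a.1 j).1 : ℤ)) : ℝ) * t : ℝ) : ℂ) * Complex.I := by
        push_cast
        ring
      rw [harg, Complex.norm_exp_ofReal_mul_I]
    rw [he, one_mul, norm_prod,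
      ENNReal.ofReal_prod_of_nonneg (fun j _ => norm_nonneg _)]
    refine Finset.prod_congr rfl fun j _ => ?_
    rw [Gf, norm_div, Complex.norm_intCast]
  rw [norm_mul, habs_c]
  have prod_ite : ∀ (a : Fin n → Z0) (j : Fin n),
      ENNReal.ofReal (|((a j).1:ℝ)| ^ (s+1)) * ∏ i, Gf v (a i)
        = ∏ i, (if i = j then Ff s v (a i) else Gf v (a i)) := by
    intro a j
    rw [← Finset.mul_prod_erase Finset.univ (fun i => Gf v (a i)) (Finset.mem_univ j),
      ← Finset.mul_prod_erase Finset.univ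
        (fun i => if i = j then Ff s v (a i) else Gf v (a i)) (Finset.mem_univ j),
      ← mul_assoc]
    congr 1
    · rw [if_pos rfl, Gf, Ff, ← ENNReal.ofReal_mul (by positivity)]
      congr 1
      have hwj := w_pos (a j)
      rw [Real.rpow_add_one (ne_of_gt hwj)]
      field_simp
    · exact Finset.prod_congr rfl fun i hi => (if_neg (Finset.mem_erase.mp hi).1).symm
  have per_a : ∀ a : Tup n k,
      ENNReal.ofReal (|(k.1:ℝ)| ^ (s+1)) * ∏ j, Gf v (a.1 j)
        ≤ ENNReal.ofReal (Cs s n) *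
            ∑ j, ∏ i, (if i = j then Ff s v (a.1 i) else Gf v (a.1 i)) := by
    intro a
    have hkey := key_weight hs (by omega : 1 ≤ n) a.1 k.1 a.2
    calc ENNReal.ofReal (|(k.1:ℝ)| ^ (s+1)) * ∏ j, Gf v (a.1 j)
        ≤ (ENNReal.ofReal (Cs s n) * ∑ j, ENNReal.ofReal (|((a.1 j).1:ℝ)| ^ (s+1))) *
            ∏ j, Gf v (a.1 j) := mul_le_mul_left hkey _
      _ = ENNReal.ofReal (Cs s n) *
            ∑ j, ENNReal.ofReal (|((a.1 j).1:ℝ)| ^ (s+1)) * ∏ i, Gf v (a.1 i) := by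
          rw [mul_assoc, Finset.sum_mul]
      _ = ENNReal.ofReal (Cs s n) *
            ∑ j, ∏ i, (if i = j then Ff s v (a.1 i) else Gf v (a.1 i)) :=
          congrArg _ (Finset.sum_congr rfl fun j _ => prod_ite a.1 j)
  have sum_a : ∑' a : Tup n k,
      ∑ j, ∏ i, (if i = j then Ff s v (a.1 i) else Gf v (a.1 i))
      = (n : ℝ≥0∞) * hZ (Ff s v) (Gf v) n k.1 := by
    rw [Summable.tsum_finsetSum (fun j _ => ENNReal.summable)]
    have hswap : ∀ j : Fin n,
        (∑' a : Tup n k, ∏ i, (if i = j then Ff s v (a.1 i) else Gf v (a.1 i)))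
          = hZ (Ff s v) (Gf v) n k.1 := fun j =>
      tsum_swap (Ff s v) (Gf v) (by omega : 1 ≤ n) j k.1
    rw [Finset.sum_congr rfl (fun j _ => hswap j),
      Finset.sum_const, Finset.card_univ, Fintype.card_fin, nsmul_eq_mul]
  calc ENNReal.ofReal (|(k.1:ℝ)| ^ s *
        (|(k.1:ℝ)| / (2 ^ (n-1) * (Nat.factorial n : ℝ)) *
          ‖∑' a : Tup n k,
            Complex.exp (Complex.I * ((Phi n fun j => ((a.1 j).1 : ℤ)) : ℂ) * (t : ℂ)) *
              ∏ j, v (a.1 j) / ((a.1 j).1 : ℂ)‖))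
      = ENNReal.ofReal (1 / (2 ^ (n-1) * (Nat.factorial n : ℝ))) *
          (ENNReal.ofReal (|(k.1:ℝ)| ^ (s+1)) *
            ENNReal.ofReal (‖∑' a : Tup n k,
              Complex.exp (Complex.I * ((Phi n fun j => ((a.1 j).1 : ℤ)) : ℂ) * (t : ℂ)) *
                ∏ j, v (a.1 j) / ((a.1 j).1 : ℂ)‖)) := by
        rw [← ENNReal.ofReal_mul (by positivity), ← ENNReal.ofReal_mul (by positivity)]
        congr 1
        rw [Real.rpow_add_one (ne_of_gt hw)]
        ring
    _ ≤ ENNReal.ofReal (1 / (2 ^ (n-1) * (Nat.factorial n : ℝ))) *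
          (ENNReal.ofReal (|(k.1:ℝ)| ^ (s+1)) *
            ∑' a : Tup n k, ∏ j, Gf v (a.1 j)) := by
        gcongr
        refine le_trans (ofReal_norm_tsum_le _) (le_of_eq (tsum_congr habs_term))
    _ = ENNReal.ofReal (1 / (2 ^ (n-1) * (Nat.factorial n : ℝ))) *
          ∑' a : Tup n k, ENNReal.ofReal (|(k.1:ℝ)| ^ (s+1)) * ∏ j, Gf v (a.1 j) := by
        rw [ENNReal.tsum_mul_left]
    _ ≤ ENNReal.ofReal (1 / (2 ^ (n-1) * (Nat.factorial n : ℝ))) *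
          ∑' a : Tup n k, ENNReal.ofReal (Cs s n) *
            ∑ j, ∏ i, (if i = j then Ff s v (a.1 i) else Gf v (a.1 i)) := by
        exact mul_le_mul_right
          (Summable.tsum_le_tsum per_a ENNReal.summable ENNReal.summable) _
    _ = ENNReal.ofReal (1 / (2 ^ (n-1) * (Nat.factorial n : ℝ))) *
          (ENNReal.ofReal (Cs s n) * ((n : ℝ≥0∞) * hZ (Ff s v) (Gf v) n k.1)) := by
        rw [ENNReal.tsum_mul_left, sum_a]
    _ = ENNReal.ofReal (Cs s n / (2 ^ (n-1) * (Nat.factorial (n-1) : ℝ))) *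
          hZ (Ff s v) (Gf v) n k.1 := by
        rw [← mul_assoc, ← mul_assoc]
        congr 1
        have hCs0 : 0 ≤ Cs s n := by
          rw [Cs]; split
          · exact zero_le_one
          · positivity
        rw [← ENNReal.ofReal_natCast n, ← ENNReal.ofReal_mul (by positivity),
          ← ENNReal.ofReal_mul (mul_nonneg (by positivity) hCs0)]
        congr 1
        have hfac : (Nat.factorial n : ℝ) = (n : ℝ) * (Nat.factorial (n-1) : ℝ) := by
          rw [← Nat.cast_mul]
          exact_mod_cast congrArg (Nat.cast : ℕ → ℝ)
            (Nat.mul_factorial_pred (by omega : n ≠ 0)).symm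
        have hfac1 : (0:ℝ) < (Nat.factorial (n-1) : ℝ) := by positivity
        have hnn : (0:ℝ) < (n:ℝ) := by positivity
        rw [hfac]
        field_simp

end NFB

/-- Multilinear estimate for `N^n(t)(v)` in `FL^{s,p}`:
`‖N^n(t)(v)‖_{FL^{s,p}} ≤ C_s(n) Z_{s,p}^{n-1} / (2^{n-1}(n-1)!) ‖v‖_{FL^{s,p}}^n`. -/
theorem Ncoef_FL_bound (s p : ℝ)
    (hsp : (-1 / p < s ∧ 1 < p) ∨ (-1 ≤ s ∧ p = 1))
    (n : ℕ) (hn : 2 ≤ n) (t : ℝ) (v : Z0 → ℂ)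
    (hv : Summable (FLsummand s p v)) :
    Summable (FLsummand s p (fun k => Ncoef n k t v)) ∧
    FLnorm s p (fun k => Ncoef n k t v) ≤
      Cs s n * Zsp s p ^ (n - 1) / (2 ^ (n - 1) * (Nat.factorial (n - 1))) *
        FLnorm s p v ^ n := by
  obtain ⟨m, rfl⟩ : ∃ m, n = m + 2 := ⟨n - 2, by omega⟩
  have hp1 : 1 ≤ p := by
    rcases hsp with ⟨_, hp⟩ | ⟨_, hp⟩
    · exact hp.le
    · exact hp.ge
  have hp0 : 0 < p := lt_of_lt_of_le one_pos hp1
  have hs1 : -1 ≤ s := by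
    rcases hsp with ⟨hs, hp⟩ | ⟨hs, _⟩
    · have h1 : 1/p < 1 := by
        rw [div_lt_one (by linarith)]
        exact hp
      have h2 : -1/p = -(1/p) := by ring
      linarith [hs, h2]
    · exact hs
  set F := NFB.Ff s v with hF
  set G := NFB.Gf v with hG
  set A : ℝ≥0∞ := ∑' m0 : Z0, F m0 ^ p with hA
  set Z' : ℝ≥0∞ := ENNReal.ofReal (Zsp s p) with hZ'
  set D : ℝ≥0∞ :=
    ENNReal.ofReal (Cs s (m+2) / (2 ^ (m+1) * (Nat.factorial (m+1) : ℝ))) with hD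
  have hFnonneg : ∀ k : Z0, 0 ≤ |(k.1:ℝ)| ^ s * ‖v k‖ := fun k =>
    mul_nonneg (Real.rpow_nonneg (abs_nonneg _) _) (norm_nonneg _)
  have hFA : ∀ k : Z0, F k ^ p = ENNReal.ofReal (FLsummand s p v k) := fun k =>
    ENNReal.ofReal_rpow_of_nonneg (hFnonneg k) hp0.le
  have hvnonneg : ∀ k : Z0, 0 ≤ FLsummand s p v k := fun k =>
    Real.rpow_nonneg (hFnonneg k) p
  have hAeq : A = ENNReal.ofReal (∑' k, FLsummand s p v k) := by
    rw [hA, tsum_congr hFA, ← ENNReal.ofReal_tsum_of_nonneg hvnonneg hv]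
  have hAne : A ≠ ∞ := by rw [hAeq]; exact ENNReal.ofReal_ne_top
  have hNnonneg : ∀ k : Z0, 0 ≤ FLsummand s p (fun k => Ncoef (m+2) k t v) k := fun k =>
    Real.rpow_nonneg (mul_nonneg (Real.rpow_nonneg (abs_nonneg _) _)
      (norm_nonneg _)) p
  have hBp : ((A ^ ((1:ℝ)/p)) : ℝ≥0∞) ^ p = A := by
    rw [← ENNReal.rpow_mul, one_div, inv_mul_cancel₀ hp0.ne', ENNReal.rpow_one]
  have main : (∑' k : Z0, ENNReal.ofReal (FLsummand s p (fun k => Ncoef (m+2) k t v) k))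
      ≤ (D * (Z' ^ (m+1) * (A ^ ((1:ℝ)/p)) ^ (m+2))) ^ p := by
    calc ∑' k : Z0, ENNReal.ofReal (FLsummand s p (fun k => Ncoef (m+2) k t v) k)
        ≤ ∑' k : Z0, (D * NFB.hZ F G (m+2) k.1) ^ p :=
          Summable.tsum_le_tsum
            (fun k => NFB.pointwise_bound s hs1 hp0 (by omega : 2 ≤ m+2) t v k)
            ENNReal.summable ENNReal.summable
      _ = D ^ p * ∑' k : Z0, NFB.hZ F G (m+2) k.1 ^ p := by
          rw [← ENNReal.tsum_mul_left]
          exact tsum_congr fun k => ENNReal.mul_rpow_of_nonneg _ _ hp0.le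
      _ ≤ D ^ p * ∑' c : ℤ, NFB.hZ F G (m+2) c ^ p := by
          gcongr
          exact ENNReal.tsum_comp_le_tsum_of_injective Subtype.val_injective _
      _ ≤ D ^ p * ((∑' m0 : Z0, F m0 ^ p) *
            (((∑' m0 : Z0, G m0) ^ (m+1)) ^ p)) := by
          gcongr
          exact NFB.conv_bound F G hp1 (m+2) (by omega)
      _ ≤ D ^ p * (A * ((Z' * A ^ ((1:ℝ)/p)) ^ (m+1)) ^ p) := by
          gcongr
          exact NFB.Gf_sum_le s p hsp v
      _ = (D * (Z' ^ (m+1) * (A ^ ((1:ℝ)/p)) ^ (m+2))) ^ p := by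
          simp only [ENNReal.mul_rpow_of_nonneg _ _ hp0.le, mul_pow, pow_succ, hBp]
          ring
  have hfin : (D * (Z' ^ (m+1) * (A ^ ((1:ℝ)/p)) ^ (m+2))) ^ p ≠ ∞ := by
    apply ENNReal.rpow_ne_top_of_nonneg hp0.le
    refine ENNReal.mul_ne_top ENNReal.ofReal_ne_top (ENNReal.mul_ne_top ?_ ?_)
    · exact ENNReal.pow_ne_top ENNReal.ofReal_ne_top
    · exact ENNReal.pow_ne_top (ENNReal.rpow_ne_top_of_nonneg (by positivity) hAne)
  have hTne : (∑' k : Z0, ENNReal.ofReal (FLsummand s p (fun k => Ncoef (m+2) k t v) k))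
      ≠ ∞ := ne_top_of_le_ne_top hfin main
  have hsum : Summable (FLsummand s p (fun k => Ncoef (m+2) k t v)) := by
    have h := ENNReal.summable_toReal hTne
    exact h.congr fun k => ENNReal.toReal_ofReal (hNnonneg k)
  refine ⟨hsum, ?_⟩
  have hTeq : ENNReal.ofReal (∑' k, FLsummand s p (fun k => Ncoef (m+2) k t v) k)
      = ∑' k : Z0, ENNReal.ofReal (FLsummand s p (fun k => Ncoef (m+2) k t v) k) :=
    ENNReal.ofReal_tsum_of_nonneg hNnonneg hsum
  have hTreal : (∑' k, FLsummand s p (fun k => Ncoef (m+2) k t v) k)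
      = (∑' k : Z0, ENNReal.ofReal
          (FLsummand s p (fun k => Ncoef (m+2) k t v) k)).toReal := by
    rw [← hTeq, ENNReal.toReal_ofReal (tsum_nonneg hNnonneg)]
  rw [FLnorm, hTreal]
  have hle2 := ENNReal.toReal_mono hfin main
  refine le_trans (Real.rpow_le_rpow ENNReal.toReal_nonneg hle2 (by positivity))
    (le_of_eq ?_)
  rw [ENNReal.toReal_rpow, ← ENNReal.rpow_mul, mul_one_div, div_self hp0.ne',
    ENNReal.rpow_one]
  have hZsp0 : 0 ≤ Zsp s p := by
    rw [Zsp]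
    split
    · exact zero_le_one
    · exact Real.rpow_nonneg (tsum_nonneg fun k => Real.rpow_nonneg (abs_nonneg _) _) _
  have hCs0 : 0 ≤ Cs s (m+2) := by
    rw [Cs]; split
    · exact zero_le_one
    · positivity
  have hAtoReal : A.toReal = ∑' k, FLsummand s p v k := by
    rw [hAeq, ENNReal.toReal_ofReal (tsum_nonneg hvnonneg)]
  rw [ENNReal.toReal_mul, ENNReal.toReal_mul, ENNReal.toReal_pow, ENNReal.toReal_pow,
    ← ENNReal.toReal_rpow, hD, hZ',
    ENNReal.toReal_ofReal (div_nonneg hCs0 (by positivity)),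
    ENNReal.toReal_ofReal hZsp0, hAtoReal, FLnorm]
  rw [show m+2-1 = m+1 from rfl]
  ring

end
end

section
/- Let J : ℝ → ℂ be continuous and 2π-periodic, and suppose M := sup_{x∈ℝ}|J(x)| satisfies 0 ≤ M < π. Then the zeroth Fourier coefficient of exp(−(i/2)J) satisfies the lower bound |(1/2π)∫₀^{2π} exp(−(i/2)J(x)) dx| ≥ e^{−M/2}·cos(M/2), and this lower bound is strictly positive. -/
noncomputable section

open Complex Real

/-- Lower bound on the zeroth Fourier coefficient of `exp(−(i/2)J)`: if `J` is continuous,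
`2π`-periodic and `|J(x)| ≤ M` with `0 ≤ M < π`, then
`|(1/2π)∫₀^{2π} exp(−(i/2)J(x))dx| ≥ e^{−M/2} cos(M/2) > 0`. -/
theorem coleHopf_zeroth_coefficient_lower_bound
    (J : ℝ → ℂ) (hJc : Continuous J)
    (hJper : ∀ x : ℝ, J (x + 2 * π) = J x)
    (M : ℝ) (hM0 : 0 ≤ M) (hMπ : M < π)
    (hMsup : ∀ x : ℝ, ‖J x‖ ≤ M) :
    0 < Real.exp (-M / 2) * Real.cos (M / 2) ∧
    Real.exp (-M / 2) * Real.cos (M / 2) ≤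
      ‖((2 * Real.pi : ℝ) : ℂ)⁻¹ *
        ∫ x in (0 : ℝ)..(2 * Real.pi), Complex.exp (-(Complex.I / 2) * J x)‖ := by
  have hπ : (0:ℝ) < π := Real.pi_pos
  set c : ℝ := Real.exp (-M / 2) * Real.cos (M / 2) with hc
  have hcospos : 0 < Real.cos (M / 2) := by
    apply Real.cos_pos_of_mem_Ioo
    constructor <;> [linarith; linarith]
  have hcpos : 0 < c := mul_pos (Real.exp_pos _) hcospos
  refine ⟨hcpos, ?_⟩
  set f : ℝ → ℂ := fun x => Complex.exp (-(Complex.I / 2) * J x) with hf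
  have hfc : Continuous f := Complex.continuous_exp.comp (continuous_const.mul hJc)
  -- pointwise lower bound on real part
  have hre : ∀ x : ℝ, c ≤ (f x).re := by
    intro x
    have hre' : (-(Complex.I / 2) * J x).re = (J x).im / 2 := by
      simp [Complex.mul_re, Complex.div_re]
      ring
    have him' : (-(Complex.I / 2) * J x).im = -(J x).re / 2 := by
      simp [Complex.mul_im, Complex.div_re]
      ring
    have hreb : |(J x).re| ≤ M := (Complex.abs_re_le_norm (J x)).trans (hMsup x)
    have himb : |(J x).im| ≤ M := (Complex.abs_im_le_norm (J x)).trans (hMsup x)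
    rw [hf]
    simp only [Complex.exp_re, hre', him']
    have h1 : Real.exp (-M / 2) ≤ Real.exp ((J x).im / 2) := by
      apply Real.exp_le_exp.2
      have := abs_le.1 himb
      linarith [this.1]
    have h2 : Real.cos (M / 2) ≤ Real.cos (-(J x).re / 2) := by
      rw [← Real.cos_abs (-(J x).re / 2)]
      apply Real.cos_le_cos_of_nonneg_of_le_pi (abs_nonneg _) (by linarith)
      rw [abs_div, abs_neg]
      simp only [abs_of_pos (show (0:ℝ) < 2 by norm_num)]
      linarith [abs_le.1 hreb |>.1, abs_le.1 hreb |>.2, abs_nonneg (J x).re,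
        (abs_le.1 hreb).2]
    calc c ≤ Real.exp ((J x).im / 2) * Real.cos (-(J x).re / 2) := by
          apply mul_le_mul h1 h2 (le_of_lt hcospos) (le_of_lt (Real.exp_pos _))
      _ = _ := rfl
  -- integrability
  have hint : IntervalIntegrable f MeasureTheory.volume 0 (2*π) :=
    hfc.intervalIntegrable _ _
  have key : 2 * π * c ≤ (∫ x in (0:ℝ)..(2*π), f x).re := by
    have hre_int : (∫ x in (0:ℝ)..(2*π), f x).re
        = ∫ x in (0:ℝ)..(2*π), (f x).re := by
      have := Complex.reCLM.intervalIntegral_comp_comm hint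
      simpa using this.symm
    rw [hre_int]
    have : 2 * π * c = ∫ _x in (0:ℝ)..(2*π), c := by
      simp [hc]; ring
    rw [this]
    apply intervalIntegral.integral_mono_on (by linarith)
      (intervalIntegrable_const)
      ((Complex.continuous_re.comp hfc).intervalIntegrable _ _)
    intro x _
    exact hre x
  have habs : 2 * π * c ≤ ‖∫ x in (0:ℝ)..(2*π), f x‖ :=
    key.trans (Complex.re_le_norm _)
  rw [norm_mul]
  have h2π : ‖(((2 * Real.pi : ℝ) : ℂ)⁻¹)‖ = (2*π)⁻¹ := by
    rw [norm_inv, Complex.norm_real, Real.norm_eq_abs, abs_of_pos (by linarith)]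
  rw [h2π]
  rw [← sub_nonneg]
  have : (2*π)⁻¹ * ‖∫ x in (0:ℝ)..(2*π), f x‖ - c
      = (2*π)⁻¹ * (‖∫ x in (0:ℝ)..(2*π), f x‖ - 2*π*c) := by
    field_simp
  rw [this]
  exact mul_nonneg (by positivity) (sub_nonneg.2 habs)

end
end
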